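/- arXiv:2310.03736 — 4 statements merged into one kernel-verified Lean document; each statement's English description precedes it below -/
import Mathlib

section
/- In any orientation of the colors of the colorful graph of an approval profile, if there exists a directed cycle, then there exists a directed cycle of length exactly three; i.e., an orientation is acyclic if and only if it induces no directed triangle. -/
/-- Voter `v` strictly prefers candidate `a` to `b`: approves `a` but not `b`. -/
def Pref {m n : ℕ} (P : Fin m → Fin n → Bool) (v : Fin n) (a b : Fin m) : Prop :=
  P a v = true ∧ P b v = false

/-- The set of NB constraints induced by an approval profile. -/
def CP {m n : ℕ} (P : Fin m → Fin n → Bool) : Set (Fin n × Fin n × Fin n) :=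
  {t | ∃ a b, Pref P t.1 a b ∧ Pref P t.2.1 b a ∧ Pref P t.2.2 a b}

/-- Adjacency in the formula graph of the induced NB constraints. -/
def FGAdj {m n : ℕ} (P : Fin m → Fin n → Bool) (u v : Fin n × Fin n) : Prop :=
  ∃ t ∈ CP P, (u = (t.1, t.2.1) ∧ v = (t.2.2, t.2.1)) ∨
              (u = (t.2.1, t.1) ∧ v = (t.2.1, t.2.2))

/-- Two ordered pairs lie in the same connected component of the formula graph
(i.e. bear the same color, with consistent base orientation). -/
def SameComp {m n : ℕ} (P : Fin m → Fin n → Bool) (u v : Fin n × Fin n) : Prop :=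
  Relation.EqvGen (FGAdj P) u v

/-- The directed pair `u` is an edge of the colorful graph (in its base orientation):
its connected component in the formula graph is not a singleton. -/
def ColoredPair {m n : ℕ} (P : Fin m → Fin n → Bool) (u : Fin n × Fin n) : Prop :=
  ∃ w, w ≠ u ∧ SameComp P u w

/-- The two edges bear the same color of the colorful graph (possibly with opposite
base orientations). -/
def SameColor {m n : ℕ} (P : Fin m → Fin n → Bool) (u v : Fin n × Fin n) : Prop :=
  SameComp P u v ∨ SameComp P u (v.2, v.1)

/-- The formula graph admits a complementary pairs partition: no component contains a
pair of complementary vertices. -/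
def Valid {m n : ℕ} (P : Fin m → Fin n → Bool) : Prop :=
  ∀ u : Fin n × Fin n, u.1 ≠ u.2 → ¬ SameComp P u (u.2, u.1)

/-- `O` is an orientation of the colors of the colorful graph: it consists of the
colorful-graph edges, each color is flipped as a whole or not at all, and each edge
appears in exactly one direction. -/
def IsOrient {m n : ℕ} (P : Fin m → Fin n → Bool) (O : Set (Fin n × Fin n)) : Prop :=
  (∀ u ∈ O, ColoredPair P u ∨ ColoredPair P (u.2, u.1)) ∧
  (∀ u v, SameComp P u v → (u ∈ O ↔ v ∈ O)) ∧
  (∀ a b : Fin n, ¬ ((a, b) ∈ O ∧ (b, a) ∈ O)) ∧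
  (∀ a b : Fin n, ColoredPair P (a, b) → (a, b) ∈ O ∨ (b, a) ∈ O)

/-! ### Auxiliary lemmas -/

lemma s11_cp_mk {m n : ℕ} {P : Fin m → Fin n → Bool} {p q r : Fin n} {a b : Fin m}
    (hp : Pref P p a b) (hq : Pref P q b a) (hr : Pref P r a b) :
    ((p, q, r) : Fin n × Fin n × Fin n) ∈ CP P :=
  ⟨a, b, hp, hq, hr⟩

lemma s11_fgadj1 {m n : ℕ} {P : Fin m → Fin n → Bool} {p q r : Fin n} {a b : Fin m}
    (hp : Pref P p a b) (hq : Pref P q b a) (hr : Pref P r a b) :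
    FGAdj P (p, q) (r, q) :=
  ⟨(p, q, r), s11_cp_mk hp hq hr, Or.inl ⟨rfl, rfl⟩⟩

lemma s11_fgadj2 {m n : ℕ} {P : Fin m → Fin n → Bool} {p q r : Fin n} {a b : Fin m}
    (hp : Pref P p a b) (hq : Pref P q b a) (hr : Pref P r a b) :
    FGAdj P (q, p) (q, r) :=
  ⟨(p, q, r), s11_cp_mk hp hq hr, Or.inr ⟨rfl, rfl⟩⟩

lemma s11_fgadj_symm {m n : ℕ} {P : Fin m → Fin n → Bool} {u v : Fin n × Fin n}
    (h : FGAdj P u v) : FGAdj P v u := by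
  obtain ⟨⟨t1, t2, t3⟩, ⟨a, b, h1, h2, h3⟩, hpat⟩ := h
  rcases hpat with ⟨hu, hv⟩ | ⟨hu, hv⟩
  · exact ⟨(t3, t2, t1), ⟨a, b, h3, h2, h1⟩, Or.inl ⟨hv, hu⟩⟩
  · exact ⟨(t3, t2, t1), ⟨a, b, h3, h2, h1⟩, Or.inr ⟨hv, hu⟩⟩

lemma s11_comp2 {m n : ℕ} {P : Fin m → Fin n → Bool} {u v z : Fin n × Fin n}
    (h1 : FGAdj P u z) (h2 : FGAdj P v z) : SameComp P u v :=
  Relation.EqvGen.trans _ _ _ (Relation.EqvGen.rel _ _ h1)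
    (Relation.EqvGen.symm _ _ (Relation.EqvGen.rel _ _ h2))

lemma s11_eqvgen_incident {α : Type*} {r : α → α → Prop} {u w : α}
    (h : Relation.EqvGen r u w) :
    u = w ∨ ((∃ z, z ≠ u ∧ (r u z ∨ r z u)) ∧ (∃ z, z ≠ w ∧ (r w z ∨ r z w))) := by
  induction h with
  | rel a b hab =>
    by_cases hab' : a = b
    · exact Or.inl hab'
    · exact Or.inr ⟨⟨b, Ne.symm hab', Or.inl hab⟩, ⟨a, hab', Or.inr hab⟩⟩
  | refl a => exact Or.inl rfl
  | symm a b hab ih =>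
    rcases ih with h' | ⟨h1, h2⟩
    · exact Or.inl h'.symm
    · exact Or.inr ⟨h2, h1⟩
  | trans a b c hab hbc ih1 ih2 =>
    rcases ih1 with rfl | ⟨h1, h2⟩
    · exact ih2
    · rcases ih2 with rfl | ⟨h3, h4⟩
      · exact Or.inr ⟨h1, h2⟩
      · exact Or.inr ⟨h1, h4⟩

lemma s11_wit {m n : ℕ} {P : Fin m → Fin n → Bool} {p q : Fin n}
    (h : ColoredPair P (p, q) ∨ ColoredPair P (q, p)) :
    ∃ a b r, Pref P p a b ∧ Pref P q b a ∧
      ((Pref P r a b ∧ r ≠ p) ∨ (Pref P r b a ∧ r ≠ q)) := by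
  have key : ∀ p' q' : Fin n, ColoredPair P (p', q') →
      ∃ a b r, Pref P p' a b ∧ Pref P q' b a ∧
        ((Pref P r a b ∧ r ≠ p') ∨ (Pref P r b a ∧ r ≠ q')) := by
    intro p' q' hc
    obtain ⟨w, hw, hcomp⟩ := hc
    rcases s11_eqvgen_incident hcomp with heq | ⟨⟨z, hz, hadj⟩, -⟩
    · exact absurd heq.symm hw
    · have hadj' : FGAdj P (p', q') z := hadj.elim id s11_fgadj_symm
      obtain ⟨⟨t1, t2, t3⟩, ⟨a, b, h1, h2, h3⟩, hpat⟩ := hadj'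
      rcases hpat with ⟨hu, hv⟩ | ⟨hu, hv⟩
      · obtain ⟨rfl, rfl⟩ : p' = t1 ∧ q' = t2 :=
          ⟨congrArg Prod.fst hu, congrArg Prod.snd hu⟩
        have hne : t3 ≠ p' := fun he => hz (by rw [hv, he])
        exact ⟨a, b, t3, h1, h2, Or.inl ⟨h3, hne⟩⟩
      · obtain ⟨rfl, rfl⟩ : p' = t2 ∧ q' = t1 :=
          ⟨congrArg Prod.fst hu, congrArg Prod.snd hu⟩
        have hne : t3 ≠ q' := fun he => hz (by rw [hv, he])
        exact ⟨b, a, t3, h2, h1, Or.inr ⟨h3, hne⟩⟩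
  rcases h with h | h
  · exact key p q h
  · obtain ⟨a, b, r, h1, h2, h3⟩ := key q p h
    exact ⟨b, a, r, h2, h1, h3.symm⟩

lemma s11_mkColored {m n : ℕ} {P : Fin m → Fin n → Bool} {p q r : Fin n} {a b : Fin m}
    (hp : Pref P p a b) (hq : Pref P q b a) (hr : Pref P r a b) (hne : r ≠ p) :
    ColoredPair P (p, q) :=
  ⟨(r, q), fun h => hne (congrArg Prod.fst h), Relation.EqvGen.rel _ _ (s11_fgadj1 hp hq hr)⟩

lemma s11_pref_ne {m n : ℕ} {P : Fin m → Fin n → Bool} {p q : Fin n} {a b : Fin m}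
    (hp : Pref P p a b) (hq : Pref P q b a) : p ≠ q := by
  intro h
  subst h
  exact absurd hq.2 (by simp [hp.1])

/-- The corner lemma: if `A → B → C` in the orientation, with given conflict pairs for
the two edges, and `A, C` are non-adjacent in the colorful graph, then neither edge's
conflict has an "outer-side" extra supporter. -/
lemma s11_corner {m n : ℕ} {P : Fin m → Fin n → Bool} {O : Set (Fin n × Fin n)}
    (hO : IsOrient P O) {A B C : Fin n} {x y z w : Fin m}
    (hAB : (A, B) ∈ O) (hBC : (B, C) ∈ O)
    (h1 : Pref P A x y) (h2 : Pref P B y x) (h3 : Pref P B z w) (h4 : Pref P C w z)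
    (hnc1 : ¬ ColoredPair P (A, C)) (hnc2 : ¬ ColoredPair P (C, A)) :
    (∀ r, Pref P r x y → r = A) ∧ (∀ r, Pref P r w z → r = C) := by
  obtain ⟨hO1, hOt, hOa, hOo⟩ := hO
  have hx1 : P x A = true := h1.1
  have hy1 : P y A = false := h1.2
  have hy2 : P y B = true := h2.1
  have hx2 : P x B = false := h2.2
  have hz3 : P z B = true := h3.1
  have hw3 : P w B = false := h3.2
  have hw4 : P w C = true := h4.1
  have hz4 : P z C = false := h4.2
  have contraCB : SameComp P (A, B) (C, B) → False := fun h =>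
    hOa B C ⟨hBC, (hOt _ _ h).mp hAB⟩
  have contraBA : SameComp P (B, C) (B, A) → False := fun h =>
    hOa A B ⟨hAB, (hOt _ _ h).mp hBC⟩
  have nconf : ∀ a b, Pref P A a b → Pref P C b a →
      (∀ r, Pref P r a b → r = A) ∧ (∀ r, Pref P r b a → r = C) := by
    intro a b hA hC
    constructor
    · intro r hr
      by_contra hne
      exact hnc1 (s11_mkColored hA hC hr hne)
    · intro r hr
      by_contra hne
      exact hnc2 (s11_mkColored hC hA hr hne)
  cases hCx : P x C with
  | true =>
    cases hCy : P y C with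
    | false =>
      exact absurd (Relation.EqvGen.rel _ _ (s11_fgadj1 h1 h2 ⟨hCx, hCy⟩)) contraCB
    | true =>
      cases hAz : P z A with
      | true =>
        cases hAw : P w A with
        | false =>
          exact absurd (s11_mkColored ⟨hAz, hAw⟩ h4 h3 (s11_pref_ne h2 h1)) hnc1
        | true =>
          -- case 5d : both indifference values `true`
          constructor
          · intro r hr
            cases hzr : P z r with
            | true => exact (nconf z y ⟨hAz, hy1⟩ ⟨hCy, hz4⟩).1 r ⟨hzr, hr.2⟩
            | false =>
              exact absurd (s11_comp2 (s11_fgadj1 h1 h2 hr)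
                (s11_fgadj1 ⟨hCx, hz4⟩ ⟨hz3, hx2⟩ ⟨hr.1, hzr⟩)) contraCB
          · intro r hr
            cases hyr : P y r with
            | true => exact (nconf z y ⟨hAz, hy1⟩ ⟨hCy, hz4⟩).2 r ⟨hyr, hr.2⟩
            | false =>
              exact absurd (Relation.EqvGen.trans _ _ _
                (Relation.EqvGen.rel _ _ (s11_fgadj2 h4 h3 hr))
                (Relation.EqvGen.rel _ _ (s11_fgadj2 ⟨hr.1, hyr⟩ ⟨hy2, hw3⟩ ⟨hAw, hy1⟩)))
                contraBA
      | false =>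
        cases hAw : P w A with
        | true =>
          exact absurd (Relation.EqvGen.rel _ _ (s11_fgadj1 ⟨hAw, hAz⟩ h3 h4)) contraCB
        | false =>
          -- case 5b
          exact absurd (Relation.EqvGen.rel _ _
            (s11_fgadj1 ⟨hx1, hAz⟩ ⟨hz3, hx2⟩ ⟨hCx, hz4⟩)) contraCB
  | false =>
    cases hCy : P y C with
    | true =>
      exact absurd (s11_mkColored ⟨hCy, hCx⟩ h1 h2 (s11_pref_ne h3 h4)) hnc2
    | false =>
      cases hAz : P z A with
      | true =>
        cases hAw : P w A with
        | false =>
          exact absurd (s11_mkColored ⟨hAz, hAw⟩ h4 h3 (s11_pref_ne h2 h1)) hnc1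
        | true =>
          -- case 5a
          exact absurd (Relation.EqvGen.rel _ _
            (s11_fgadj1 ⟨hAw, hy1⟩ ⟨hy2, hw3⟩ ⟨hw4, hCy⟩)) contraCB
      | false =>
        cases hAw : P w A with
        | true =>
          exact absurd (Relation.EqvGen.rel _ _ (s11_fgadj1 ⟨hAw, hAz⟩ h3 h4)) contraCB
        | false =>
          -- case 5c : both indifference values `false`
          constructor
          · intro r hr
            cases hwr : P w r with
            | false => exact (nconf x w ⟨hx1, hAw⟩ ⟨hw4, hCx⟩).1 r ⟨hr.1, hwr⟩
            | true =>
              exact absurd (s11_comp2 (s11_fgadj1 h1 h2 hr)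
                (s11_fgadj1 ⟨hw4, hCy⟩ ⟨hy2, hw3⟩ ⟨hwr, hr.2⟩)) contraCB
          · intro r hr
            cases hxr : P x r with
            | false => exact (nconf x w ⟨hx1, hAw⟩ ⟨hw4, hCx⟩).2 r ⟨hr.1, hxr⟩
            | true =>
              exact absurd (Relation.EqvGen.trans _ _ _
                (Relation.EqvGen.rel _ _ (s11_fgadj2 h4 h3 hr))
                (Relation.EqvGen.rel _ _ (s11_fgadj2 ⟨hxr, hr.2⟩ ⟨hz3, hx2⟩ ⟨hx1, hAz⟩)))
                contraBA

lemma s11_transgen_path {α : Type*} {R : α → α → Prop} {a b : α}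
    (h : Relation.TransGen R a b) :
    ∃ (L : ℕ) (g : ℕ → α), 0 < L ∧ g 0 = a ∧ g L = b ∧ ∀ i < L, R (g i) (g (i + 1)) := by
  induction h with
  | @single b hab =>
    refine ⟨1, fun i => if i = 0 then a else b, one_pos, if_pos rfl, if_neg one_ne_zero, ?_⟩
    intro i hi
    have hi0 : i = 0 := by omega
    subst hi0
    show R (if (0 : ℕ) = 0 then a else b) (if (0 : ℕ) + 1 = 0 then a else b)
    rw [if_pos rfl, if_neg (by omega)]
    exact hab
  | @tail b c hab hbc ih =>
    obtain ⟨L, g, hL, h0, hLb, he⟩ := ih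
    refine ⟨L + 1, fun i => if i = L + 1 then c else g i, by omega, ?_, if_pos rfl, ?_⟩
    · show (if 0 = L + 1 then c else g 0) = a
      rw [if_neg (by omega)]
      exact h0
    · intro i hi
      show R (if i = L + 1 then c else g i) (if i + 1 = L + 1 then c else g (i + 1))
      by_cases hiL : i = L
      · subst hiL
        rw [if_neg (by omega), if_pos rfl, hLb]
        exact hbc
      · rw [if_neg (by omega), if_neg (by omega)]
        exact he i (by omega)

/-- assuming each individual color class is acyclic, an orientation of the
colors of the colorful graph is acyclic iff it induces no directed cycle of length three. -/
theorem stmt11 {m n : ℕ} (P : Fin m → Fin n → Bool)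
    (hvalid : Valid P)
    (hmono : ∀ (u : Fin n × Fin n) (a : Fin n),
      ¬ Relation.TransGen (fun x y => x ≠ y ∧ SameComp P (x, y) u) a a)
    (O : Set (Fin n × Fin n)) (hO : IsOrient P O) :
    (∀ a : Fin n, ¬ Relation.TransGen (fun x y => (x, y) ∈ O) a a) ↔
    ¬ ∃ a b c : Fin n, (a, b) ∈ O ∧ (b, c) ∈ O ∧ (c, a) ∈ O := by
  have hOc := hO
  obtain ⟨hO1, hOt, hOa, hOo⟩ := hOc
  constructor
  · intro hacyc
    rintro ⟨a, b, c, hab, hbc, hca⟩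
    exact hacyc a (Relation.TransGen.tail
      (Relation.TransGen.tail (Relation.TransGen.single hab) hbc) hca)
  · intro hno a0 hcyc
    have hS : ∃ L : ℕ, 0 < L ∧ ∃ g : ℕ → Fin n, g L = g 0 ∧
        ∀ i < L, (g i, g (i + 1)) ∈ O := by
      obtain ⟨L, g, hL, h0, hLb, he⟩ := s11_transgen_path hcyc
      exact ⟨L, hL, g, by rw [hLb, h0], he⟩
    classical
    obtain ⟨L, hspec, hmin⟩ :
        ∃ L : ℕ, (0 < L ∧ ∃ g : ℕ → Fin n, g L = g 0 ∧ ∀ i < L, (g i, g (i + 1)) ∈ O) ∧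
          ∀ K < L, ¬ (0 < K ∧ ∃ g : ℕ → Fin n, g K = g 0 ∧ ∀ i < K, (g i, g (i + 1)) ∈ O) :=
      ⟨Nat.find hS, Nat.find_spec hS, fun K hK => Nat.find_min hS hK⟩
    obtain ⟨hLpos, g, hgc, hge⟩ := hspec
    rcases L with _ | _ | _ | _ | K
    · omega
    · -- length 1 : a self-loop, impossible
      have hE : (g 0, g 1) ∈ O := hge 0 (by omega)
      have hgc' : g 1 = g 0 := hgc
      rw [hgc'] at hE
      obtain ⟨a', b', r', hp, hq, -⟩ := s11_wit (hO1 _ hE)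
      exact absurd hq.2 (by simp [hp.1])
    · -- length 2 : antiparallel edges, impossible
      have hE0 : (g 0, g 1) ∈ O := hge 0 (by omega)
      have hE1 : (g 1, g 2) ∈ O := hge 1 (by omega)
      have hgc' : g 2 = g 0 := hgc
      rw [hgc'] at hE1
      exact hOa (g 0) (g 1) ⟨hE0, hE1⟩
    · -- length 3 : a directed triangle
      have hE0 : (g 0, g 1) ∈ O := hge 0 (by omega)
      have hE1 : (g 1, g 2) ∈ O := hge 1 (by omega)
      have hE2 : (g 2, g 3) ∈ O := hge 2 (by omega)
      have hgc' : g 3 = g 0 := hgc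
      rw [hgc'] at hE2
      exact hno ⟨g 0, g 1, g 2, hE0, hE1, hE2⟩
    · -- length K + 4 : impossible by the corner lemma
      have hgc' : g (K + 4) = g 0 := hgc
      have hge' : ∀ i < K + 4, (g i, g (i + 1)) ∈ O := hge
      have hE0 : (g 0, g 1) ∈ O := hge' 0 (by omega)
      have hE1 : (g 1, g 2) ∈ O := hge' 1 (by omega)
      have hEL : (g (K + 3), g 0) ∈ O := by
        have h := hge' (K + 3) (by omega)
        have h' : (g (K + 3), g (K + 4)) ∈ O := h
        rwa [hgc'] at h'
      -- no shorter cycles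
      have hs2 : (g 2, g 0) ∈ O → False := by
        intro hch
        refine hmin 3 (by omega) ⟨by omega, fun i => g (i % 3), rfl, ?_⟩
        intro i hi
        interval_cases i
        · exact hE0
        · exact hE1
        · exact hch
      have hs4 : (g 1, g (K + 3)) ∈ O → False := by
        intro hch
        refine hmin 3 (by omega)
          ⟨by omega, fun i => if i % 3 = 0 then g (K + 3) else if i % 3 = 1 then g 0 else g 1,
            rfl, ?_⟩
        intro i hi
        interval_cases i
        · exact hEL
        · exact hE0
        · exact hch
      have hs1 : (g 0, g 2) ∈ O → False := by
        intro hch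
        refine hmin (K + 3) (by omega)
          ⟨by omega, fun i => if i = K + 3 then g 2 else g (i + 2), ?_, ?_⟩
        · show (if K + 3 = K + 3 then g 2 else g (K + 3 + 2)) =
            (if 0 = K + 3 then g 2 else g (0 + 2))
          rw [if_pos rfl, if_neg (by omega)]
        · intro i hi
          show ((if i = K + 3 then g 2 else g (i + 2)),
            (if i + 1 = K + 3 then g 2 else g (i + 1 + 2))) ∈ O
          by_cases hik : i = K + 2
          · subst hik
            rw [if_neg (by omega), if_pos (by omega)]
            rw [show g (K + 2 + 2) = g 0 from hgc']
            exact hch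
          · rw [if_neg (by omega), if_neg (by omega)]
            exact hge' (i + 2) (by omega)
      have hs3 : (g (K + 3), g 1) ∈ O → False := by
        intro hch
        refine hmin (K + 3) (by omega)
          ⟨by omega, fun i => if i = K + 3 then g 1 else g (i + 1), ?_, ?_⟩
        · show (if K + 3 = K + 3 then g 1 else g (K + 3 + 1)) =
            (if 0 = K + 3 then g 1 else g (0 + 1))
          rw [if_pos rfl, if_neg (by omega)]
        · intro i hi
          show ((if i = K + 3 then g 1 else g (i + 1)),
            (if i + 1 = K + 3 then g 1 else g (i + 1 + 1))) ∈ O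
          by_cases hik : i = K + 2
          · subst hik
            rw [if_neg (by omega), if_pos (by omega)]
            exact hch
          · rw [if_neg (by omega), if_neg (by omega)]
            exact hge' (i + 1) (by omega)
      -- non-adjacency of the would-be chords
      have hnc02 : ¬ ColoredPair P (g 0, g 2) := fun h => (hOo (g 0) (g 2) h).elim hs1 hs2
      have hnc20 : ¬ ColoredPair P (g 2, g 0) := fun h => (hOo (g 2) (g 0) h).elim hs2 hs1
      have hncL1 : ¬ ColoredPair P (g (K + 3), g 1) := fun h =>
        (hOo (g (K + 3)) (g 1) h).elim hs3 hs4
      have hnc1L : ¬ ColoredPair P (g 1, g (K + 3)) := fun h =>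
        (hOo (g 1) (g (K + 3)) h).elim hs4 hs3
      -- conflicts and a witness for the edge (g 0, g 1)
      obtain ⟨x, y, r, hp01, hq01, hform⟩ := s11_wit (hO1 _ hE0)
      obtain ⟨z, w, r2, hp12, hq12, -⟩ := s11_wit (hO1 _ hE1)
      obtain ⟨u, v, rL, hpL, hqL, -⟩ := s11_wit (hO1 _ hEL)
      rcases hform with ⟨hrxy, hrne⟩ | ⟨hryx, hrne⟩
      · exact hrne ((s11_corner hO hE0 hE1 hp01 hq01 hp12 hq12 hnc02 hnc20).1 r hrxy)
      · exact hrne ((s11_corner hO hEL hE0 hpL hqL hp01 hq01 hncL1 hnc1L).2 r hryx)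
end

section
/- If voters 1, 2, 3 are such that edges (1,2), (2,3), (3,1) exist in the colorful graph of an approval profile and bear three pairwise distinct colors, then there exist pairwise disjoint voter sets S_1 ∋ 1, S_2 ∋ 2, S_3 ∋ 3 such that the connected components of (1,2), (2,3), (3,1) in the formula graph are exactly S_1 × S_2, S_2 × S_3, and S_3 × S_1 respectively; in particular each of the three colors forms a complete bipartite (biclique) set of directed edges. -/
namespace Stmt13Aux

variable {m n : ℕ} (P : Fin m → Fin n → Bool)

lemma comp_trans {u v w : Fin n × Fin n} (h1 : SameComp P u v) (h2 : SameComp P v w) :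
    SameComp P u w :=
  Relation.EqvGen.trans _ _ _ h1 h2

lemma comp_symm {u v : Fin n × Fin n} (h : SameComp P u v) : SameComp P v u :=
  Relation.EqvGen.symm _ _ h

lemma comp_refl (u : Fin n × Fin n) : SameComp P u u :=
  Relation.EqvGen.refl _

lemma edge1 {p q : Fin m} {i j k : Fin n} (hi : Pref P i p q) (hj : Pref P j q p)
    (hk : Pref P k p q) : FGAdj P (i, j) (k, j) :=
  ⟨(i, j, k), ⟨p, q, hi, hj, hk⟩, Or.inl ⟨rfl, rfl⟩⟩

lemma edge2 {p q : Fin m} {i j l : Fin n} (hi : Pref P i p q) (hj : Pref P j q p)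
    (hl : Pref P l q p) : FGAdj P (i, j) (i, l) :=
  ⟨(j, i, l), ⟨q, p, hj, hi, hl⟩, Or.inr ⟨rfl, rfl⟩⟩

/-- Any two pairs in the product `V_{pq} × V_{qp}` lie in the same component. -/
lemma prodSame {p q : Fin m} {i j k l : Fin n} (hi : Pref P i p q) (hj : Pref P j q p)
    (hk : Pref P k p q) (hl : Pref P l q p) : SameComp P (i, j) (k, l) :=
  comp_trans P (Relation.EqvGen.rel _ _ (edge1 P hi hj hk))
    (Relation.EqvGen.rel _ _ (edge2 P hk hj hl))

lemma adj_swap {u v : Fin n × Fin n} (h : FGAdj P u v) : FGAdj P (u.2, u.1) (v.2, v.1) := by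
  obtain ⟨t, ht, ⟨e1, e2⟩ | ⟨e1, e2⟩⟩ := h <;> subst e1 <;> subst e2
  · exact ⟨t, ht, Or.inr ⟨rfl, rfl⟩⟩
  · exact ⟨t, ht, Or.inl ⟨rfl, rfl⟩⟩

lemma same_swap {u v : Fin n × Fin n} (h : SameComp P u v) :
    SameComp P (u.2, u.1) (v.2, v.1) := by
  induction h with
  | rel x y hxy => exact Relation.EqvGen.rel _ _ (adj_swap P hxy)
  | refl x => exact Relation.EqvGen.refl _
  | symm x y _ ih => exact Relation.EqvGen.symm _ _ ih
  | trans x y z _ _ ih1 ih2 => exact Relation.EqvGen.trans _ _ _ ih1 ih2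

lemma adj_symm {u v : Fin n × Fin n} (h : FGAdj P u v) : FGAdj P v u := by
  obtain ⟨t, ⟨p, q, h1, h2, h3⟩, ⟨e1, e2⟩ | ⟨e1, e2⟩⟩ := h <;> subst e1 <;> subst e2
  · exact edge1 P h3 h2 h1
  · exact edge2 P h2 h3 h1

/-- A pair `u` is in conflict: its coordinates disagree on some pair of candidates. -/
def Conf (u : Fin n × Fin n) : Prop :=
  ∃ p q, Pref P u.1 p q ∧ Pref P u.2 q p

lemma adj_conf {u v : Fin n × Fin n} (h : FGAdj P u v) : Conf P u ∧ Conf P v := by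
  obtain ⟨t, ⟨p, q, h1, h2, h3⟩, ⟨e1, e2⟩ | ⟨e1, e2⟩⟩ := h <;> subst e1 <;> subst e2
  · exact ⟨⟨p, q, h1, h2⟩, ⟨p, q, h3, h2⟩⟩
  · exact ⟨⟨q, p, h2, h1⟩, ⟨q, p, h2, h3⟩⟩

lemma same_conf {u v : Fin n × Fin n} (h : SameComp P u v) :
    u = v ∨ (Conf P u ∧ Conf P v) := by
  induction h with
  | rel x y hxy => exact Or.inr (adj_conf P hxy)
  | refl x => exact Or.inl rfl
  | symm x y _ ih =>
    rcases ih with h' | ⟨h1, h2⟩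
    · exact Or.inl h'.symm
    · exact Or.inr ⟨h2, h1⟩
  | trans x y z _ _ ih1 ih2 =>
    rcases ih1 with rfl | ⟨c1, c2⟩
    · exact ih2
    · rcases ih2 with rfl | ⟨c3, c4⟩
      · exact Or.inr ⟨c1, c2⟩
      · exact Or.inr ⟨c1, c4⟩

lemma colored_conf {u : Fin n × Fin n} (h : ColoredPair P u) : Conf P u := by
  obtain ⟨w, hne, hs⟩ := h
  rcases same_conf P hs with h' | ⟨h1, _⟩
  · exact absurd h'.symm hne
  · exact h1

lemma colored_of_same {u v : Fin n × Fin n} (hc : ColoredPair P u) (h : SameComp P u v) :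
    ColoredPair P v := by
  obtain ⟨w, hne, hs⟩ := hc
  by_cases hwv : w = v
  · subst hwv
    exact ⟨u, fun e => hne e.symm, comp_symm P h⟩
  · exact ⟨w, hwv, comp_trans P (comp_symm P h) hs⟩

lemma colored_swap {u : Fin n × Fin n} (h : ColoredPair P u) : ColoredPair P (u.2, u.1) := by
  obtain ⟨w, hne, hs⟩ := h
  refine ⟨(w.2, w.1), fun e => hne ?_, same_swap P hs⟩
  have e1 := congrArg Prod.fst e
  have e2 := congrArg Prod.snd e
  exact Prod.ext_iff.mpr ⟨e2, e1⟩

lemma sameColor_symm {u v : Fin n × Fin n} (h : SameColor P u v) : SameColor P v u := by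
  rcases h with h | h
  · exact Or.inl (comp_symm P h)
  · exact Or.inr (comp_symm P (same_swap P h))

/-- The core step lemma: given a first-coordinate edge of the formula graph from `(x, y)`
to `(x', y)`, witnessed by the candidate pair `(p, q)`, if the triple `(x, y, c)` realizes
the triangle `(a, b, c)` component-wise, then `(c, x')` is in the component of `(c, a)`. -/
lemma core {a b c x x' y : Fin n} {p q : Fin m}
    (h1 : ¬ SameColor P (a, b) (b, c)) (h2 : ¬ SameColor P (b, c) (c, a))
    (h3 : ¬ SameColor P (a, b) (c, a))
    (hca : ColoredPair P (c, a))
    (hx : Pref P x p q) (hx' : Pref P x' p q) (hy : Pref P y q p)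
    (hA : SameComp P (a, b) (x, y)) (hB : SameComp P (b, c) (y, c))
    (hC : SameComp P (c, a) (c, x)) : SameComp P (c, a) (c, x') := by
  obtain ⟨t, w, hct, hxw⟩ := colored_conf P (colored_of_same P hca hC)
  -- collision helpers
  have endh1 : SameComp P (a, b) (c, y) → False := fun h =>
    h1 (Or.inr (comp_trans P h (comp_symm P (same_swap P hB))))
  have endh3' : SameComp P (c, a) (b, a) → False := fun h =>
    h3 (Or.inr (comp_symm P (same_swap P h)))
  have endh3 : SameComp P (c, a) (y, x) → False := fun h =>
    endh3' (comp_trans P h (comp_symm P (same_swap P hA)))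
  have endh2 : SameComp P (c, a) (c, y) → False := fun h =>
    h2 (Or.inr (comp_symm P (same_swap P (comp_trans P h (comp_symm P (same_swap P hB))))))
  have hA' : SameComp P (a, b) (x', y) := comp_trans P hA (prodSame P hx hy hx' hy)
  have mk1 : ∀ {α β : Fin m}, Pref P c α β → Pref P x' α β → Pref P y β α → False :=
    fun hc hx'' hy' =>
      endh1 (comp_trans P hA' (comp_symm P (prodSame P hc hy' hx'' hy')))
  have mk2 : ∀ {α β : Fin m}, Pref P c α β → Pref P y α β → Pref P x β α → False :=
    fun hc hy' hx'' => endh3 (comp_trans P hC (prodSame P hc hx'' hy' hx''))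
  have kill_c_pq : ¬ Pref P c p q := fun h =>
    endh1 (comp_trans P hA (prodSame P hx hy h hy))
  have kill_c_qp : ¬ Pref P c q p := fun h =>
    endh3' (comp_trans P hC (comp_symm P (same_swap P (comp_trans P hA (prodSame P hx hy hx h)))))
  have kill_y_tw : ¬ Pref P y t w := fun h =>
    endh3 (comp_trans P hC (prodSame P hct hxw h hxw))
  have kill_y_wt : ¬ Pref P y w t := fun h =>
    endh2 (comp_trans P hC (prodSame P hct hxw hct h))
  -- status of c on {p, q}
  have hcB_or : (P p c = true ∧ P q c = true) ∨ (P p c = false ∧ P q c = false) := by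
    cases hpc : P p c <;> cases hqc : P q c
    · exact Or.inr ⟨rfl, rfl⟩
    · exact absurd ⟨hqc, hpc⟩ kill_c_qp
    · exact absurd ⟨hpc, hqc⟩ kill_c_pq
    · exact Or.inl ⟨rfl, rfl⟩
  -- status of y on {t, w}
  have hyt_or : (P t y = true ∧ P w y = true) ∨ (P t y = false ∧ P w y = false) := by
    cases hty : P t y <;> cases hwy : P w y
    · exact Or.inr ⟨rfl, rfl⟩
    · exact absurd ⟨hwy, hty⟩ kill_y_wt
    · exact absurd ⟨hty, hwy⟩ kill_y_tw
    · exact Or.inl ⟨rfl, rfl⟩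
  cases htx' : P t x' <;> cases hwx' : P w x'
  -- (t, w) status of x' : neither
  · rcases hcB_or with ⟨hpc, hqc⟩ | ⟨hpc, hqc⟩
    · rcases hyt_or with ⟨hty, hwy⟩ | ⟨hty, hwy⟩
      · exact (mk1 ⟨hpc, hct.2⟩ ⟨hx'.1, hwx'⟩ ⟨hwy, hy.2⟩).elim
      · exact (mk2 ⟨hqc, hct.2⟩ ⟨hy.1, hwy⟩ ⟨hxw.1, hx.2⟩).elim
    · exact comp_trans P hC (prodSame P ⟨hct.1, hpc⟩ ⟨hx.1, hxw.2⟩ ⟨hct.1, hpc⟩ ⟨hx'.1, htx'⟩)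
  -- x' in V_{wt} : done directly
  · exact comp_trans P hC (prodSame P hct hxw hct ⟨hwx', htx'⟩)
  -- x' in V_{tw}
  · rcases hcB_or with ⟨hpc, hqc⟩ | ⟨hpc, hqc⟩
    · rcases hyt_or with ⟨hty, hwy⟩ | ⟨hty, hwy⟩
      · exact (mk1 ⟨hpc, hct.2⟩ ⟨hx'.1, hwx'⟩ ⟨hwy, hy.2⟩).elim
      · exact (mk2 ⟨hqc, hct.2⟩ ⟨hy.1, hwy⟩ ⟨hxw.1, hx.2⟩).elim
    · rcases hyt_or with ⟨hty, hwy⟩ | ⟨hty, hwy⟩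
      · exact (mk2 ⟨hct.1, hpc⟩ ⟨hty, hy.2⟩ ⟨hx.1, hxw.2⟩).elim
      · exact (mk1 ⟨hct.1, hqc⟩ ⟨htx', hx'.2⟩ ⟨hy.1, hty⟩).elim
  -- (t, w) status of x' : both
  · rcases hcB_or with ⟨hpc, hqc⟩ | ⟨hpc, hqc⟩
    · exact comp_trans P hC (prodSame P ⟨hqc, hct.2⟩ ⟨hxw.1, hx.2⟩ ⟨hqc, hct.2⟩ ⟨hwx', hx'.2⟩)
    · rcases hyt_or with ⟨hty, hwy⟩ | ⟨hty, hwy⟩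
      · exact (mk2 ⟨hct.1, hpc⟩ ⟨hty, hy.2⟩ ⟨hx.1, hxw.2⟩).elim
      · exact (mk1 ⟨hct.1, hqc⟩ ⟨htx', hx'.2⟩ ⟨hy.1, hty⟩).elim

/-- The invariant carried around the component of `(a, b)`. -/
def Good (a b c : Fin n) (u : Fin n × Fin n) : Prop :=
  SameComp P (a, b) u ∧ SameComp P (b, c) (u.2, c) ∧ SameComp P (c, a) (c, u.1)

/-- The transfer lemma: any member `(x, y)` of the component of `(a, b)` satisfies
`(y, c) ∈ comp (b, c)` and `(c, x) ∈ comp (c, a)`. -/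
lemma transfer {a b c : Fin n}
    (hab : ColoredPair P (a, b)) (hbc : ColoredPair P (b, c)) (hca : ColoredPair P (c, a))
    (h1 : ¬ SameColor P (a, b) (b, c)) (h2 : ¬ SameColor P (b, c) (c, a))
    (h3 : ¬ SameColor P (a, b) (c, a)) :
    ∀ u : Fin n × Fin n, SameComp P (a, b) u →
      SameComp P (b, c) (u.2, c) ∧ SameComp P (c, a) (c, u.1) := by
  have h1' : ¬ SameColor P (b, a) (a, c) := by
    rintro (h | h)
    · exact h3 (Or.inl (same_swap P h))
    · exact h3 (Or.inr (same_swap P h))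
  have h2' : ¬ SameColor P (a, c) (c, b) := by
    rintro (h | h)
    · exact h2 (Or.inl (comp_symm P (same_swap P h)))
    · exact h2 (Or.inr (comp_symm P h))
  have h3' : ¬ SameColor P (b, a) (c, b) := by
    rintro (h | h)
    · exact h1 (Or.inl (same_swap P h))
    · exact h1 (Or.inr (same_swap P h))
  have step : ∀ u v : Fin n × Fin n, FGAdj P u v → Good P a b c u → Good P a b c v := by
    rintro u v ⟨t, ⟨p, q, hp1, hp2, hp3⟩, ⟨e1, e2⟩ | ⟨e1, e2⟩⟩ ⟨gA, gB, gC⟩ <;>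
      subst e1 <;> subst e2
    · exact ⟨comp_trans P gA (prodSame P hp1 hp2 hp3 hp2), gB,
        core P h1 h2 h3 hca hp1 hp3 hp2 gA gB gC⟩
    · refine ⟨comp_trans P gA (prodSame P hp2 hp1 hp2 hp3), ?_, gC⟩
      have conc := core P h1' h2' h3' (colored_swap P hbc) hp1 hp3 hp2
        (same_swap P gA) (same_swap P gC) (same_swap P gB)
      exact same_swap P conc
  have inv : ∀ u v : Fin n × Fin n, Relation.EqvGen (FGAdj P) u v →
      (Good P a b c u ↔ Good P a b c v) := by
    intro u v h
    induction h with
    | rel x y hxy => exact ⟨step x y hxy, step y x (adj_symm P hxy)⟩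
    | refl x => exact Iff.rfl
    | symm x y _ ih => exact ih.symm
    | trans x y z _ _ ih1 ih2 => exact ih1.trans ih2
  intro u hu
  have hg := (inv (a, b) u hu).mp ⟨comp_refl P _, comp_refl P _, comp_refl P _⟩
  exact ⟨hg.2.1, hg.2.2⟩

/-- Under the triangle hypotheses, the component of `(a, b)` is a product. -/
lemma prodA {a b c : Fin n}
    (hab : ColoredPair P (a, b)) (hbc : ColoredPair P (b, c)) (hca : ColoredPair P (c, a))
    (h1 : ¬ SameColor P (a, b) (b, c)) (h2 : ¬ SameColor P (b, c) (c, a))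
    (h3 : ¬ SameColor P (a, b) (c, a)) :
    {u : Fin n × Fin n | SameComp P (a, b) u} =
      {x : Fin n | SameComp P (a, b) (x, b)} ×ˢ {y : Fin n | SameComp P (a, b) (a, y)} := by
  have T1 := transfer P hab hbc hca h1 h2 h3
  have h2b : ¬ SameColor P (c, a) (a, b) := fun h => h3 (sameColor_symm P h)
  have h3b : ¬ SameColor P (b, c) (a, b) := fun h => h1 (sameColor_symm P h)
  have T2 := transfer P hbc hca hab h2 h2b h3b
  have h3c : ¬ SameColor P (c, a) (b, c) := fun h => h2 (sameColor_symm P h)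
  have T3 := transfer P hca hab hbc h2b h1 h3c
  ext u
  obtain ⟨x, y⟩ := u
  simp only [Set.mem_setOf_eq, Set.mem_prod]
  constructor
  · intro h
    exact ⟨(T3 (c, x) (T1 (x, y) h).2).1, (T2 (y, c) (T1 (x, y) h).1).2⟩
  · rintro ⟨hx1, hy2⟩
    have hyB : SameComp P (b, c) (y, c) := (T1 (a, y) hy2).1
    have hxC : SameComp P (c, a) (c, x) := (T1 (x, b) hx1).2
    have hay : ColoredPair P (a, y) := colored_of_same P hab hy2
    have hyc : ColoredPair P (y, c) := colored_of_same P hbc hyB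
    have k1 : ¬ SameColor P (c, a) (a, y) := by
      rintro (h | h)
      · exact h3 (Or.inl (comp_symm P (comp_trans P h (comp_symm P hy2))))
      · exact h3 (Or.inr (comp_trans P hy2 (comp_symm P (same_swap P h))))
    have k2 : ¬ SameColor P (a, y) (y, c) := by
      rintro (h | h)
      · exact h1 (Or.inl (comp_trans P (comp_trans P hy2 h) (comp_symm P hyB)))
      · exact h1 (Or.inr (comp_trans P (comp_trans P hy2 h) (comp_symm P (same_swap P hyB))))
    have k3 : ¬ SameColor P (c, a) (y, c) := by
      rintro (h | h)
      · exact h2 (Or.inl (comp_symm P (comp_trans P h (comp_symm P hyB))))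
      · exact h2 (Or.inr (comp_symm P (comp_trans P (same_swap P h) (comp_symm P hyB))))
    have Tm := transfer P hca hay hyc k1 k2 k3
    exact comp_trans P hy2 (Tm (c, x) hxC).1

end Stmt13Aux

open Stmt13Aux in
/-- if edges `(1,2)`, `(2,3)`, `(3,1)` exist in the colorful graph with three
pairwise distinct colors, then there are pairwise disjoint voter sets `S_1 ∋ 1`, `S_2 ∋ 2`,
`S_3 ∋ 3` such that the components of `(1,2)`, `(2,3)`, `(3,1)` in the formula graph are
exactly `S_1 × S_2`, `S_2 × S_3`, `S_3 × S_1`: the three colors are biclique colors. -/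
theorem stmt13 {m n : ℕ} (P : Fin m → Fin n → Bool) (hvalid : Valid P)
    (a b c : Fin n)
    (hab : ColoredPair P (a, b)) (hbc : ColoredPair P (b, c))
    (hca : ColoredPair P (c, a))
    (h1 : ¬ SameColor P (a, b) (b, c))
    (h2 : ¬ SameColor P (b, c) (c, a))
    (h3 : ¬ SameColor P (a, b) (c, a)) :
    ∃ S1 S2 S3 : Set (Fin n),
      Disjoint S1 S2 ∧ Disjoint S2 S3 ∧ Disjoint S1 S3 ∧
      a ∈ S1 ∧ b ∈ S2 ∧ c ∈ S3 ∧
      {u | SameComp P (a, b) u} = S1 ×ˢ S2 ∧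
      {u | SameComp P (b, c) u} = S2 ×ˢ S3 ∧
      {u | SameComp P (c, a) u} = S3 ×ˢ S1 := by
  have T1 := transfer P hab hbc hca h1 h2 h3
  have h2b : ¬ SameColor P (c, a) (a, b) := fun h => h3 (sameColor_symm P h)
  have h3b : ¬ SameColor P (b, c) (a, b) := fun h => h1 (sameColor_symm P h)
  have T2 := transfer P hbc hca hab h2 h2b h3b
  have h3c : ¬ SameColor P (c, a) (b, c) := fun h => h2 (sameColor_symm P h)
  have T3 := transfer P hca hab hbc h2b h1 h3c
  set S1 : Set (Fin n) := {x | SameComp P (a, b) (x, b)} with hS1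
  set S2 : Set (Fin n) := {y | SameComp P (a, b) (a, y)} with hS2
  set S3 : Set (Fin n) := {z | SameComp P (c, a) (z, a)} with hS3
  -- the three product identities
  have eqA : {u | SameComp P (a, b) u} = S1 ×ˢ S2 :=
    prodA P hab hbc hca h1 h2 h3
  have e2 : {y | SameComp P (b, c) (y, c)} = S2 := by
    ext y
    exact ⟨fun h => (T2 (y, c) h).2, fun h => (T1 (a, y) h).1⟩
  have e3 : {z | SameComp P (b, c) (b, z)} = S3 := by
    ext z
    exact ⟨fun h => (T2 (b, z) h).1, fun h => (T3 (z, a) h).2⟩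
  have eqB : {u | SameComp P (b, c) u} = S2 ×ˢ S3 := by
    have := prodA P hbc hca hab h2 h2b h3b
    rw [this, e2, e3]
  have e1 : {x | SameComp P (c, a) (c, x)} = S1 := by
    ext x
    exact ⟨fun h => (T3 (c, x) h).1, fun h => (T1 (x, b) h).2⟩
  have eqC : {u | SameComp P (c, a) u} = S3 ×ˢ S1 := by
    have := prodA P hca hab hbc h2b h1 h3c
    rw [this, e1]
  -- no diagonal pair belongs to a colored component
  have nodiag : ∀ (u : Fin n × Fin n) (x : Fin n),
      ColoredPair P u → SameComp P u (x, x) → False := by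
    intro u x hcu hs
    obtain ⟨p, q, hpq, hqp⟩ := colored_conf P (colored_of_same P hcu hs)
    have hf := hqp.2
    rw [hpq.1] at hf
    exact Bool.noConfusion hf
  refine ⟨S1, S2, S3, ?_, ?_, ?_, comp_refl P _, comp_refl P _, comp_refl P _, eqA, eqB, eqC⟩
  · refine Set.disjoint_left.mpr fun x hx1 hx2 => ?_
    have hm : (x, x) ∈ S1 ×ˢ S2 := ⟨hx1, hx2⟩
    rw [← eqA] at hm
    exact nodiag _ _ hab hm
  · refine Set.disjoint_left.mpr fun x hx2 hx3 => ?_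
    have hm : (x, x) ∈ S2 ×ˢ S3 := ⟨hx2, hx3⟩
    rw [← eqB] at hm
    exact nodiag _ _ hbc hm
  · refine Set.disjoint_left.mpr fun x hx1 hx3 => ?_
    have hm : (x, x) ∈ S3 ×ˢ S1 := ⟨hx3, hx1⟩
    rw [← eqC] at hm
    exact nodiag _ _ hca hm
end

section
/- If voters 1, 2, 3 are such that edges (1,2) and (2,3) exist in the colorful graph of an approval profile with distinct colors, and the edge between 1 and 3 does not exist in the colorful graph, then there exists a voter set S with 2 ∈ S and 1, 3 ∉ S such that the connected components of (1,2) and (2,3) in the formula graph are exactly {1} × S and S × {3} respectively (so both colors are star bicliques). -/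
namespace Stmt14Aux

variable {m n : ℕ}

lemma Pref_ne (P : Fin m → Fin n → Bool) {x w : Fin n} {u v : Fin m}
    (h1 : Pref P x u v) (h2 : Pref P w v u) : x ≠ w := by
  rintro rfl
  have h1a := h1.1
  rw [h2.2] at h1a
  exact Bool.noConfusion h1a

lemma mem_CP (P : Fin m → Fin n → Bool) {x y z : Fin n} {p q : Fin m}
    (hx : Pref P x p q) (hy : Pref P y q p) (hz : Pref P z p q) :
    (x, y, z) ∈ CP P := ⟨p, q, hx, hy, hz⟩

lemma adj1 (P : Fin m → Fin n → Bool) {x y z : Fin n} (h : (x, y, z) ∈ CP P) :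
    FGAdj P (x, y) (z, y) := ⟨(x, y, z), h, Or.inl ⟨rfl, rfl⟩⟩

lemma adj2 (P : Fin m → Fin n → Bool) {x y z : Fin n} (h : (x, y, z) ∈ CP P) :
    FGAdj P (y, x) (y, z) := ⟨(x, y, z), h, Or.inr ⟨rfl, rfl⟩⟩

lemma CP_rev (P : Fin m → Fin n → Bool) {x y z : Fin n} (h : (x, y, z) ∈ CP P) :
    (z, y, x) ∈ CP P := by
  obtain ⟨p, q, h1, h2, h3⟩ := h
  exact ⟨p, q, h3, h2, h1⟩

lemma FGAdj_symm (P : Fin m → Fin n → Bool) {u v : Fin n × Fin n}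
    (h : FGAdj P u v) : FGAdj P v u := by
  obtain ⟨⟨x, y, z⟩, ht, h | h⟩ := h
  · obtain ⟨rfl, rfl⟩ := h; exact adj1 P (CP_rev P ht)
  · obtain ⟨rfl, rfl⟩ := h; exact adj2 P (CP_rev P ht)

lemma FGAdj_swap (P : Fin m → Fin n → Bool) {u v : Fin n × Fin n}
    (h : FGAdj P u v) : FGAdj P (u.2, u.1) (v.2, v.1) := by
  obtain ⟨⟨x, y, z⟩, ht, h | h⟩ := h
  · obtain ⟨rfl, rfl⟩ := h; exact adj2 P ht
  · obtain ⟨rfl, rfl⟩ := h; exact adj1 P ht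

lemma sc_refl (P : Fin m → Fin n → Bool) (u : Fin n × Fin n) : SameComp P u u :=
  Relation.EqvGen.refl u

lemma sc_symm (P : Fin m → Fin n → Bool) {u v : Fin n × Fin n}
    (h : SameComp P u v) : SameComp P v u := Relation.EqvGen.symm _ _ h

lemma sc_trans (P : Fin m → Fin n → Bool) {u v w : Fin n × Fin n}
    (h1 : SameComp P u v) (h2 : SameComp P v w) : SameComp P u w :=
  Relation.EqvGen.trans _ _ _ h1 h2

lemma sc_adj (P : Fin m → Fin n → Bool) {u v : Fin n × Fin n}
    (h : FGAdj P u v) : SameComp P u v := Relation.EqvGen.rel _ _ h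

lemma sc_swap (P : Fin m → Fin n → Bool) {u v : Fin n × Fin n}
    (h : SameComp P u v) : SameComp P (u.2, u.1) (v.2, v.1) := by
  induction h with
  | rel x y h => exact sc_adj P (FGAdj_swap P h)
  | refl x => exact sc_refl P _
  | symm x y h ih => exact sc_symm P ih
  | trans x y z h1 h2 ih1 ih2 => exact sc_trans P ih1 ih2

lemma not_FGAdj_diag (P : Fin m → Fin n → Bool) {x : Fin n} {v : Fin n × Fin n}
    (h : FGAdj P (x, x) v) : False := by
  obtain ⟨⟨x', y', z'⟩, ht, h | h⟩ := h
  · obtain ⟨h1, _⟩ := h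
    injection h1 with e1 e2
    obtain ⟨p, q, hp1, hp2, _⟩ := ht
    exact Pref_ne P hp1 hp2 (e1.symm.trans e2)
  · obtain ⟨h1, _⟩ := h
    injection h1 with e1 e2
    obtain ⟨p, q, hp1, hp2, _⟩ := ht
    exact Pref_ne P hp1 hp2 (e2.symm.trans e1)

lemma comp_diag (P : Fin m → Fin n → Bool) {x : Fin n} {w : Fin n × Fin n}
    (h : SameComp P (x, x) w) : w = (x, x) := by
  have key : ∀ u v : Fin n × Fin n, SameComp P u v →
      (u = (x, x) → v = (x, x)) ∧ (v = (x, x) → u = (x, x)) := by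
    intro u v h
    induction h with
    | rel u v h =>
      constructor
      · rintro rfl; exact (not_FGAdj_diag P h).elim
      · rintro rfl; exact (not_FGAdj_diag P (FGAdj_symm P h)).elim
    | refl u => exact ⟨id, id⟩
    | symm u v h ih => exact ⟨ih.2, ih.1⟩
    | trans u v w h1 h2 ih1 ih2 => exact ⟨fun h => ih2.1 (ih1.1 h), fun h => ih1.2 (ih2.2 h)⟩
  exact (key _ _ h).1 rfl

lemma exists_adj (P : Fin m → Fin n → Bool) {u w : Fin n × Fin n}
    (h : SameComp P u w) (hne : u ≠ w) : ∃ v, FGAdj P u v := by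
  classical
  have key : ∀ x y : Fin n × Fin n, SameComp P x y →
      (x ≠ y → ∃ v, FGAdj P x v) ∧ (y ≠ x → ∃ v, FGAdj P y v) := by
    intro x y h
    induction h with
    | rel x y h => exact ⟨fun _ => ⟨y, h⟩, fun _ => ⟨x, FGAdj_symm P h⟩⟩
    | refl x => exact ⟨fun h => absurd rfl h, fun h => absurd rfl h⟩
    | symm x y h ih => exact ⟨ih.2, ih.1⟩
    | trans x y z h1 h2 ih1 ih2 =>
      constructor
      · intro hxz
        by_cases hxy : x = y
        · subst hxy
          exact ih2.1 hxz
        · exact ih1.1 hxy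
      · intro hzx
        by_cases hzy : z = y
        · subst hzy
          exact ih1.2 hzx
        · exact ih2.2 hzy
  exact (key _ _ h).1 hne

/-- `y` and `c` conflict: some pair of candidates separates them. -/
def Conf (P : Fin m → Fin n → Bool) (y c : Fin n) : Prop :=
  ∃ p q, Pref P y p q ∧ Pref P c q p

lemma conf_of_colored (P : Fin m → Fin n → Bool) {b c : Fin n}
    (h : ColoredPair P (b, c)) : Conf P b c := by
  obtain ⟨w, hw, hcomp⟩ := h
  obtain ⟨v, hadj⟩ := exists_adj P hcomp fun h => hw h.symm
  obtain ⟨⟨x', y', z'⟩, ht, h | h⟩ := hadj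
  · obtain ⟨h1, _⟩ := h
    injection h1 with e1 e2
    subst e1; subst e2
    obtain ⟨p, q, hp1, hp2, _⟩ := ht
    exact ⟨p, q, hp1, hp2⟩
  · obtain ⟨h1, _⟩ := h
    injection h1 with e1 e2
    subst e1; subst e2
    obtain ⟨p, q, hp1, hp2, _⟩ := ht
    exact ⟨q, p, hp2, hp1⟩


variable {m n : ℕ}

lemma main (P : Fin m → Fin n → Bool) (a b c : Fin n)
    (hbc : ColoredPair P (b, c))
    (hd1 : ¬ SameComp P (a, b) (b, c)) (hd2 : ¬ SameComp P (a, b) (c, b))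
    (hn1 : ¬ ColoredPair P (a, c)) :
    ∃ S : Set (Fin n), b ∈ S ∧ (∀ y ∈ S, SameComp P (b, c) (y, c)) ∧
      {u | SameComp P (a, b) u} = {a} ×ˢ S := by
  classical
  -- contradiction helpers
  have CA1 : ∀ (u v : Fin m) (w : Fin n),
      Pref P a u v → Pref P c v u → Pref P w u v → w ≠ a → False := by
    intro u v w h1 h2 h3 hw
    exact hn1 ⟨(w, c), fun h => hw (congrArg Prod.fst h),
      sc_adj P (adj1 P (mem_CP P h1 h2 h3))⟩
  have CA2 : ∀ (u v : Fin m) (w : Fin n),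
      Pref P w u v → Pref P a v u → Pref P c u v → w ≠ c → False := by
    intro u v w h1 h2 h3 hw
    exact hn1 ⟨(a, w), fun h => hw (congrArg Prod.snd h),
      sc_symm P (sc_adj P (adj2 P (mem_CP P h1 h2 h3)))⟩
  have W3 : ∀ y : Fin n, SameComp P (a, b) (c, y) → SameComp P (b, c) (y, c) → False := by
    intro y h1 h2
    have h1' : SameComp P (b, a) (y, c) := sc_swap P h1
    have h3 : SameComp P (b, c) (b, a) := sc_trans P h2 (sc_symm P h1')
    exact hd2 (sc_symm P (sc_swap P h3))
  have CA3 : ∀ (y : Fin n) (u v : Fin m),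
      SameComp P (a, b) (a, y) → SameComp P (b, c) (y, c) →
      Pref P a u v → Pref P y v u → Pref P c u v → False := by
    intro y u v hy1 hy2 h1 h2 h3
    exact W3 y (sc_trans P hy1 (sc_adj P (adj1 P (mem_CP P h1 h2 h3)))) hy2
  have CA4 : ∀ (y z : Fin n) (u v : Fin m),
      SameComp P (a, b) (a, y) → SameComp P (b, c) (y, c) → FGAdj P (y, a) (y, z) →
      Pref P z u v → Pref P y v u → Pref P c u v → False := by
    intro y z u v hy1 hy2 hadj h1 h2 h3
    have e1 : SameComp P (b, c) (y, z) :=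
      sc_trans P hy2 (sc_symm P (sc_adj P (adj2 P (mem_CP P h1 h2 h3))))
    have e2 : SameComp P (b, a) (y, z) := sc_trans P (sc_swap P hy1) (sc_adj P hadj)
    have h3 : SameComp P (b, c) (b, a) := sc_trans P e1 (sc_symm P e2)
    exact hd2 (sc_symm P (sc_swap P h3))
  have confb : Conf P b c := conf_of_colored P hbc
  -- the exchange step lemma
  have key1 : ∀ y z : Fin n, SameComp P (a, b) (a, y) → SameComp P (b, c) (y, c) →
      Conf P y c → (y, a, z) ∈ CP P → SameComp P (b, c) (z, c) ∧ Conf P z c := by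
    intro y z hy1 hy2 hy3 hz
    obtain ⟨p, q, hyp, hap, hzp⟩ := hz
    obtain ⟨r, s, hyr, hcr⟩ := hy3
    have hya : y ≠ a := Pref_ne P hyp hap
    have hyc : y ≠ c := Pref_ne P hyr hcr
    have adjyz : FGAdj P (a, y) (a, z) := adj2 P (mem_CP P hyp hap hzp)
    have hzc : z ≠ c := by
      rintro rfl
      exact hn1 ⟨(a, y), fun h => hyc (congrArg Prod.snd h),
        sc_symm P (sc_adj P adjyz)⟩
    cases hqc : P q c with
    | true =>
      cases hpc : P p c with
      | false =>
        -- Pref c q p : direct witness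
        have hc' : Pref P c q p := ⟨hqc, hpc⟩
        exact ⟨sc_trans P hy2 (sc_adj P (adj1 P (mem_CP P hyp hc' hzp))),
          ⟨p, q, hzp, hc'⟩⟩
      | true =>
        -- γ = true
        cases hra : P r a with
        | true =>
          cases hsa : P s a with
          | false => exact (CA1 r s y ⟨hra, hsa⟩ hcr hyr hya).elim
          | true =>
            -- α' = true
            cases hrz : P r z with
            | true =>
              cases hsz : P s z with
              | false =>
                have hz' : Pref P z r s := ⟨hrz, hsz⟩
                exact ⟨sc_trans P hy2 (sc_adj P (adj1 P (mem_CP P hyr hcr hz'))),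
                  ⟨r, s, hz', hcr⟩⟩
              | true =>
                have hc' : Pref P c q r := ⟨hqc, hcr.2⟩
                have hy' : Pref P y r q := ⟨hyr.1, hyp.2⟩
                have hz' : Pref P z r q := ⟨hrz, hzp.2⟩
                exact ⟨sc_trans P hy2 (sc_adj P (adj1 P (mem_CP P hy' hc' hz'))),
                  ⟨r, q, hz', hc'⟩⟩
            | false =>
              exact (CA2 p r z ⟨hzp.1, hrz⟩ ⟨hra, hap.2⟩ ⟨hpc, hcr.2⟩ hzc).elim
        | false =>
          cases hsa : P s a with
          | true => exact (CA3 y s r hy1 hy2 ⟨hsa, hra⟩ hyr hcr).elim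
          | false =>
            -- α' = false
            cases hrz : P r z with
            | true =>
              cases hsz : P s z with
              | false =>
                have hz' : Pref P z r s := ⟨hrz, hsz⟩
                exact ⟨sc_trans P hy2 (sc_adj P (adj1 P (mem_CP P hyr hcr hz'))),
                  ⟨r, s, hz', hcr⟩⟩
              | true =>
                have hc' : Pref P c q r := ⟨hqc, hcr.2⟩
                have hy' : Pref P y r q := ⟨hyr.1, hyp.2⟩
                have hz' : Pref P z r q := ⟨hrz, hzp.2⟩
                exact ⟨sc_trans P hy2 (sc_adj P (adj1 P (mem_CP P hy' hc' hz'))),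
                  ⟨r, q, hz', hc'⟩⟩
            | false =>
              exact (CA3 y q r hy1 hy2 ⟨hap.1, hra⟩ ⟨hyr.1, hyp.2⟩ ⟨hqc, hcr.2⟩).elim
    | false =>
      cases hpc : P p c with
      | true =>
        exact (CA2 p q y hyp hap ⟨hpc, hqc⟩ hyc).elim
      | false =>
        -- γ = false
        cases hra : P r a with
        | true =>
          cases hsa : P s a with
          | false => exact (CA1 r s y ⟨hra, hsa⟩ hcr hyr hya).elim
          | true =>
            -- α' = true
            cases hrz : P r z with
            | true =>
              cases hsz : P s z with
              | false =>
                have hz' : Pref P z r s := ⟨hrz, hsz⟩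
                exact ⟨sc_trans P hy2 (sc_adj P (adj1 P (mem_CP P hyr hcr hz'))),
                  ⟨r, s, hz', hcr⟩⟩
              | true =>
                exact (CA3 y s p hy1 hy2 ⟨hsa, hap.2⟩ ⟨hyp.1, hyr.2⟩ ⟨hcr.1, hpc⟩).elim
            | false =>
              cases hsz : P s z with
              | true =>
                exact (CA3 y s p hy1 hy2 ⟨hsa, hap.2⟩ ⟨hyp.1, hyr.2⟩ ⟨hcr.1, hpc⟩).elim
              | false =>
                have hc' : Pref P c s p := ⟨hcr.1, hpc⟩
                have hy' : Pref P y p s := ⟨hyp.1, hyr.2⟩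
                have hz' : Pref P z p s := ⟨hzp.1, hsz⟩
                exact ⟨sc_trans P hy2 (sc_adj P (adj1 P (mem_CP P hy' hc' hz'))),
                  ⟨p, s, hz', hc'⟩⟩
        | false =>
          cases hsa : P s a with
          | true => exact (CA3 y s r hy1 hy2 ⟨hsa, hra⟩ hyr hcr).elim
          | false =>
            -- α' = false
            cases hrz : P r z with
            | true =>
              cases hsz : P s z with
              | false =>
                have hz' : Pref P z r s := ⟨hrz, hsz⟩
                exact ⟨sc_trans P hy2 (sc_adj P (adj1 P (mem_CP P hyr hcr hz'))),
                  ⟨r, s, hz', hcr⟩⟩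
              | true =>
                exact (CA2 s q z ⟨hsz, hzp.2⟩ ⟨hap.1, hsa⟩ ⟨hcr.1, hqc⟩ hzc).elim
            | false =>
              cases hsz : P s z with
              | true =>
                exact (CA2 s q z ⟨hsz, hzp.2⟩ ⟨hap.1, hsa⟩ ⟨hcr.1, hqc⟩ hzc).elim
              | false =>
                have hc' : Pref P c s p := ⟨hcr.1, hpc⟩
                have hy' : Pref P y p s := ⟨hyp.1, hyr.2⟩
                have hz' : Pref P z p s := ⟨hzp.1, hsz⟩
                exact ⟨sc_trans P hy2 (sc_adj P (adj1 P (mem_CP P hy' hc' hz'))),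
                  ⟨p, s, hz', hc'⟩⟩
  -- the star step lemma
  have keya : ∀ y z : Fin n, SameComp P (a, b) (a, y) → SameComp P (b, c) (y, c) →
      Conf P y c → (a, y, z) ∈ CP P → z = a := by
    intro y z hy1 hy2 hy3 hz
    by_contra hza
    obtain ⟨p, q, hapq, hyq, hzp⟩ := hz
    obtain ⟨r, s, hyr, hcr⟩ := hy3
    have hya : y ≠ a := Pref_ne P hyq hapq
    have hyc : y ≠ c := Pref_ne P hyr hcr
    have hadj2 : FGAdj P (y, a) (y, z) := adj2 P (mem_CP P hapq hyq hzp)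
    have hzc : z ≠ c := by
      rintro rfl
      exact CA3 y p q hy1 hy2 hapq hyq ⟨hzp.1, hzp.2⟩
    cases hqc : P q c with
    | true =>
      cases hpc : P p c with
      | false => exact CA1 p q z hapq ⟨hqc, hpc⟩ hzp hza
      | true =>
        -- γ = true
        cases hra : P r a with
        | true =>
          cases hsa : P s a with
          | false => exact CA1 r s y ⟨hra, hsa⟩ hcr hyr hya
          | true =>
            -- α' = true
            cases hrz : P r z with
            | true => exact CA1 r q z ⟨hra, hapq.2⟩ ⟨hqc, hcr.2⟩ ⟨hrz, hzp.2⟩ hza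
            | false =>
              cases hsz : P s z with
              | true => exact CA4 y z s r hy1 hy2 hadj2 ⟨hsz, hrz⟩ hyr hcr
              | false => exact CA4 y z p r hy1 hy2 hadj2 ⟨hzp.1, hrz⟩ ⟨hyr.1, hyq.2⟩ ⟨hpc, hcr.2⟩
        | false =>
          cases hsa : P s a with
          | true => exact CA3 y s r hy1 hy2 ⟨hsa, hra⟩ hyr hcr
          | false => exact CA3 y p r hy1 hy2 ⟨hapq.1, hra⟩ ⟨hyr.1, hyq.2⟩ ⟨hpc, hcr.2⟩
    | false =>
      cases hpc : P p c with
      | true => exact CA3 y p q hy1 hy2 hapq hyq ⟨hpc, hqc⟩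
      | false =>
        -- γ = false
        cases hra : P r a with
        | true =>
          cases hsa : P s a with
          | false => exact CA1 r s y ⟨hra, hsa⟩ hcr hyr hya
          | true => exact CA3 y s q hy1 hy2 ⟨hsa, hapq.2⟩ ⟨hyq.1, hyr.2⟩ ⟨hcr.1, hqc⟩
        | false =>
          cases hsa : P s a with
          | true => exact CA3 y s q hy1 hy2 ⟨hsa, hapq.2⟩ ⟨hyq.1, hyr.2⟩ ⟨hcr.1, hqc⟩
          | false =>
            -- α' = false
            cases hsz : P s z with
            | false =>
              cases hrz : P r z with
              | true => exact CA1 p s z ⟨hapq.1, hsa⟩ ⟨hcr.1, hpc⟩ ⟨hzp.1, hsz⟩ hza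
              | false => exact CA1 p s z ⟨hapq.1, hsa⟩ ⟨hcr.1, hpc⟩ ⟨hzp.1, hsz⟩ hza
            | true =>
              cases hrz : P r z with
              | false => exact CA4 y z s r hy1 hy2 hadj2 ⟨hsz, hrz⟩ hyr hcr
              | true => exact CA4 y z s q hy1 hy2 hadj2 ⟨hsz, hzp.2⟩ ⟨hyq.1, hyr.2⟩ ⟨hcr.1, hqc⟩
  -- the inductively generated star set
  have inv : ∀ y : Fin n,
      Relation.ReflTransGen (fun u v : Fin n => (u, a, v) ∈ CP P) b y →
      SameComp P (a, b) (a, y) ∧ SameComp P (b, c) (y, c) ∧ Conf P y c := by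
    intro y hy
    induction hy with
    | refl => exact ⟨sc_refl P _, sc_refl P _, confb⟩
    | @tail y' z' hchain hstep ih =>
      obtain ⟨ih1, ih2, ih3⟩ := ih
      have h1 : SameComp P (a, b) (a, z') := sc_trans P ih1 (sc_adj P (adj2 P hstep))
      obtain ⟨h2, h3⟩ := key1 y' z' ih1 ih2 ih3 hstep
      exact ⟨h1, h2, h3⟩
  have hbS : Relation.ReflTransGen (fun u v : Fin n => (u, a, v) ∈ CP P) b b :=
    Relation.ReflTransGen.refl
  refine ⟨{y | Relation.ReflTransGen (fun u v : Fin n => (u, a, v) ∈ CP P) b y},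
    hbS, fun y hy => (inv y hy).2.1, ?_⟩
  have closed : ∀ u v : Fin n × Fin n, FGAdj P u v →
      (u.1 = a ∧ Relation.ReflTransGen (fun u v : Fin n => (u, a, v) ∈ CP P) b u.2) →
      (v.1 = a ∧ Relation.ReflTransGen (fun u v : Fin n => (u, a, v) ∈ CP P) b v.2) := by
    intro u v hadj hu
    obtain ⟨⟨x, y, z⟩, ht, h | h⟩ := hadj
    · obtain ⟨rfl, rfl⟩ := h
      obtain ⟨hxa, hys⟩ := hu
      have hxa' : x = a := hxa
      subst hxa'
      have hz := keya y z (inv y hys).1 (inv y hys).2.1 (inv y hys).2.2 ht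
      exact ⟨hz, hys⟩
    · obtain ⟨rfl, rfl⟩ := h
      obtain ⟨hya, hxs⟩ := hu
      have hya' : y = a := hya
      subst hya'
      exact ⟨rfl, hxs.tail ht⟩
  have iff_closed : ∀ u v : Fin n × Fin n, SameComp P u v →
      ((u.1 = a ∧ Relation.ReflTransGen (fun u v : Fin n => (u, a, v) ∈ CP P) b u.2) ↔
       (v.1 = a ∧ Relation.ReflTransGen (fun u v : Fin n => (u, a, v) ∈ CP P) b v.2)) := by
    intro u v h
    induction h with
    | rel x y h => exact ⟨closed _ _ h, closed _ _ (FGAdj_symm P h)⟩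
    | refl x => exact Iff.rfl
    | symm x y h ih => exact ih.symm
    | trans x y z h1 h2 ih1 ih2 => exact ih1.trans ih2
  ext u
  simp only [Set.mem_setOf_eq, Set.mem_prod, Set.mem_singleton_iff]
  constructor
  · intro hu
    exact (iff_closed _ _ hu).1 ⟨rfl, hbS⟩
  · rintro ⟨h1, h2⟩
    obtain ⟨u1, u2⟩ := u
    have h1' : u1 = a := h1
    subst h1'
    exact (inv u2 h2).1


end Stmt14Aux

/-- if edges `(1,2)` and `(2,3)` exist in the colorful graph with distinct
colors and the edge between `1` and `3` does not exist in the colorful graph, then there is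
a voter set `S` with `2 ∈ S` and `1, 3 ∉ S` such that the components of `(1,2)` and `(2,3)`
in the formula graph are exactly `{1} × S` and `S × {3}` (star bicliques). -/


theorem stmt14 {m n : ℕ} (P : Fin m → Fin n → Bool) (hvalid : Valid P)
    (a b c : Fin n)
    (hab : ColoredPair P (a, b)) (hbc : ColoredPair P (b, c))
    (hdiff : ¬ SameColor P (a, b) (b, c))
    (hnoedge : ¬ ColoredPair P (a, c) ∧ ¬ ColoredPair P (c, a)) :
    ∃ S : Set (Fin n), b ∈ S ∧ a ∉ S ∧ c ∉ S ∧
      {u | SameComp P (a, b) u} = {a} ×ˢ S ∧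
      {u | SameComp P (b, c) u} = S ×ˢ {c} := by
  classical
  have hab_ne : a ≠ b := by
    rintro rfl
    obtain ⟨w, hw, hc⟩ := hab
    exact hw (Stmt14Aux.comp_diag P hc)
  have hbc_ne : b ≠ c := by
    rintro rfl
    obtain ⟨w, hw, hc⟩ := hbc
    exact hw (Stmt14Aux.comp_diag P hc)
  have hd1 : ¬ SameComp P (a, b) (b, c) := fun h => hdiff (Or.inl h)
  have hd2 : ¬ SameComp P (a, b) (c, b) := fun h => hdiff (Or.inr h)
  obtain ⟨S, hbS, hSinv, hcomp1⟩ := Stmt14Aux.main P a b c hbc hd1 hd2 hnoedge.1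
  have hba : ColoredPair P (b, a) := by
    obtain ⟨w, hw, hc⟩ := hab
    refine ⟨(w.2, w.1), ?_, Stmt14Aux.sc_swap P hc⟩
    intro h
    apply hw
    have h1 : w.2 = b := congrArg Prod.fst h
    have h2 : w.1 = a := congrArg Prod.snd h
    have : w = (w.1, w.2) := rfl
    rw [this, h1, h2]
  have hd1' : ¬ SameComp P (c, b) (b, a) := by
    intro h
    exact hd1 (Stmt14Aux.sc_symm P (Stmt14Aux.sc_swap P h))
  have hd2' : ¬ SameComp P (c, b) (a, b) := fun h => hd2 (Stmt14Aux.sc_symm P h)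
  obtain ⟨S', hbS', hS'inv, hcomp2⟩ := Stmt14Aux.main P c b a hba hd1' hd2' hnoedge.2
  have hSS' : S' = S := by
    ext x
    constructor
    · intro hx
      have h : SameComp P (a, b) (a, x) := Stmt14Aux.sc_swap P (hS'inv x hx)
      have h2 : (a, x) ∈ {u | SameComp P (a, b) u} := h
      rw [hcomp1] at h2
      exact h2.2
    · intro hx
      have h : SameComp P (c, b) (c, x) := Stmt14Aux.sc_swap P (hSinv x hx)
      have h2 : (c, x) ∈ {u | SameComp P (c, b) u} := h
      rw [hcomp2] at h2
      exact h2.2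
  have haS : a ∉ S := by
    intro haS
    have h : (a, a) ∈ ({a} : Set (Fin n)) ×ˢ S := Set.mem_prod.mpr ⟨rfl, haS⟩
    rw [← hcomp1] at h
    have h2 := Stmt14Aux.comp_diag P (Stmt14Aux.sc_symm P h)
    exact hab_ne (congrArg Prod.snd h2).symm
  have hcS : c ∉ S := by
    intro hcS
    have h : (a, c) ∈ ({a} : Set (Fin n)) ×ˢ S := Set.mem_prod.mpr ⟨rfl, hcS⟩
    rw [← hcomp1] at h
    exact hnoedge.1 ⟨(a, b), fun h' => hbc_ne (congrArg Prod.snd h'),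
      Stmt14Aux.sc_symm P h⟩
  refine ⟨S, hbS, haS, hcS, hcomp1, ?_⟩
  ext ⟨u1, u2⟩
  simp only [Set.mem_setOf_eq, Set.mem_prod, Set.mem_singleton_iff]
  constructor
  · intro hu
    have h : SameComp P (c, b) (u2, u1) := Stmt14Aux.sc_swap P hu
    have h2 : (u2, u1) ∈ {u | SameComp P (c, b) u} := h
    rw [hcomp2] at h2
    obtain ⟨h3, h4⟩ := Set.mem_prod.mp h2
    exact ⟨hSS' ▸ h4, h3⟩
  · rintro ⟨h1, rfl⟩
    exact hSinv u1 h1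
end

section
/- If the colorful graph of an approval profile has no monochromatic directed cycle, then it admits an acyclic orientation of its colors, obtainable by orienting each color involved in a three-colored triangle (which is a biclique A_i × B_i) from A_i to B_i iff min A_i < min B_i, and orienting all remaining colors arbitrarily topologically; in particular, an approval profile is possibly single-crossing iff its formula graph has no component containing complementary vertices and its colorful graph has no monochromatic cycle. -/
/-- A non-betweenness constraint `(i, j, k)` is satisfied by a strict order `r`
if `j` is not strictly between `i` and `k`. -/
def nbSat {V : Type*} (r : V → V → Prop) (c : V × V × V) : Prop :=
  ¬ (r c.1 c.2.1 ∧ r c.2.1 c.2.2) ∧ ¬ (r c.2.2 c.2.1 ∧ r c.2.1 c.1)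

/-- The color of the directed pair `u` takes part in a three-colored triangle of the
colorful graph. -/
def InThreeColoredTriangle {m n : ℕ} (P : Fin m → Fin n → Bool)
    (u : Fin n × Fin n) : Prop :=
  ∃ x y z : Fin n,
    ColoredPair P (x, y) ∧ ColoredPair P (y, z) ∧ ColoredPair P (z, x) ∧
    ¬ SameColor P (x, y) (y, z) ∧ ¬ SameColor P (y, z) (z, x) ∧
    ¬ SameColor P (x, y) (z, x) ∧ SameColor P u (x, y)


namespace S15

variable {m n : ℕ} {P : Fin m → Fin n → Bool}

/-- `u` is a pair of voters lying in the biclique of candidate pair `(a,b)`. -/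
def InB (P : Fin m → Fin n → Bool) (a b : Fin m) (u : Fin n × Fin n) : Prop :=
  Pref P u.1 a b ∧ Pref P u.2 b a

def Linked (P : Fin m → Fin n → Bool) (u : Fin n × Fin n) : Prop :=
  ∃ a b, InB P a b u

lemma inB_ne {a b : Fin m} {u : Fin n × Fin n} (h : InB P a b u) : u.1 ≠ u.2 := by
  intro he
  have h1 := h.1.1
  have h2 := h.2.2
  rw [he] at h1
  rw [h1] at h2
  exact Bool.noConfusion h2

lemma linked_ne {u : Fin n × Fin n} (h : Linked P u) : u.1 ≠ u.2 := by
  obtain ⟨a, b, h⟩ := h; exact inB_ne h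

lemma inB_swap {a b : Fin m} {u : Fin n × Fin n} (h : InB P a b u) :
    InB P b a (u.2, u.1) := ⟨h.2, h.1⟩

lemma linked_swap {u : Fin n × Fin n} (h : Linked P u) : Linked P (u.2, u.1) := by
  obtain ⟨a, b, h⟩ := h; exact ⟨b, a, inB_swap h⟩

lemma SC_refl {u : Fin n × Fin n} : SameComp P u u := Relation.EqvGen.refl u

lemma SC_symm {u v : Fin n × Fin n} (h : SameComp P u v) : SameComp P v u :=
  Relation.EqvGen.symm _ _ h

lemma SC_trans {u v w : Fin n × Fin n} (h1 : SameComp P u v) (h2 : SameComp P v w) :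
    SameComp P u w := Relation.EqvGen.trans _ _ _ h1 h2

/-- Two pairs lying in a common biclique are in the same component. -/
lemma sameComp_of_inB {a b : Fin m} {u v : Fin n × Fin n}
    (hu : InB P a b u) (hv : InB P a b v) : SameComp P u v := by
  have ht1 : ((u.1, u.2, v.1) : Fin n × Fin n × Fin n) ∈ CP P :=
    ⟨a, b, hu.1, hu.2, hv.1⟩
  have ht2 : ((u.2, v.1, v.2) : Fin n × Fin n × Fin n) ∈ CP P :=
    ⟨b, a, hu.2, hv.1, hv.2⟩
  have s1 : FGAdj P u (v.1, u.2) := ⟨(u.1, u.2, v.1), ht1, Or.inl ⟨rfl, rfl⟩⟩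
  have s2 : FGAdj P (v.1, u.2) v := ⟨(u.2, v.1, v.2), ht2, Or.inr ⟨rfl, rfl⟩⟩
  exact SC_trans (Relation.EqvGen.rel _ _ s1) (Relation.EqvGen.rel _ _ s2)

/-- Every formula-graph edge comes from a common biclique. -/
lemma fgadj_inB {u v : Fin n × Fin n} (h : FGAdj P u v) :
    ∃ a b, InB P a b u ∧ InB P a b v := by
  obtain ⟨t, ⟨a, b, h1, h2, h3⟩, hcase⟩ := h
  rcases hcase with ⟨hu, hv⟩ | ⟨hu, hv⟩
  · subst hu; subst hv; exact ⟨a, b, ⟨h1, h2⟩, ⟨h3, h2⟩⟩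
  · subst hu; subst hv; exact ⟨b, a, ⟨h2, h1⟩, ⟨h2, h3⟩⟩

lemma sameComp_swap {u v : Fin n × Fin n} (h : SameComp P u v) :
    SameComp P (u.2, u.1) (v.2, v.1) := by
  induction h with
  | rel x y hxy =>
      obtain ⟨a, b, hx, hy⟩ := fgadj_inB hxy
      exact sameComp_of_inB (inB_swap hx) (inB_swap hy)
  | refl x => exact SC_refl
  | symm x y _ ih => exact SC_symm ih
  | trans x y z _ _ ih1 ih2 => exact SC_trans ih1 ih2

lemma sameComp_linked {u v : Fin n × Fin n} (h : SameComp P u v) :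
    u = v ∨ (Linked P u ∧ Linked P v) := by
  induction h with
  | rel x y hxy =>
      obtain ⟨a, b, hx, hy⟩ := fgadj_inB hxy
      exact Or.inr ⟨⟨a, b, hx⟩, ⟨a, b, hy⟩⟩
  | refl x => exact Or.inl rfl
  | symm x y _ ih => rcases ih with h | ⟨h1, h2⟩
                     · exact Or.inl h.symm
                     · exact Or.inr ⟨h2, h1⟩
  | trans x y z _ _ ih1 ih2 =>
      rcases ih1 with h | ⟨h1, h2⟩
      · rcases ih2 with h' | ⟨h1', h2'⟩
        · exact Or.inl (h.trans h')
        · exact Or.inr ⟨h ▸ h1', h2'⟩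
      · rcases ih2 with h' | ⟨h1', h2'⟩
        · exact Or.inr ⟨h1, h' ▸ h2⟩
        · exact Or.inr ⟨h1, h2'⟩

lemma linked_of_sameComp {u v : Fin n × Fin n} (hu : Linked P u)
    (h : SameComp P u v) : Linked P v := by
  rcases sameComp_linked h with h' | ⟨_, h2⟩
  · exact h' ▸ hu
  · exact h2

lemma sameComp_diag {u v : Fin n × Fin n} (h : SameComp P u v) (hd : u.1 = u.2) :
    u = v := by
  rcases sameComp_linked h with h' | ⟨h1, _⟩
  · exact h'
  · exact absurd hd (linked_ne h1)


/-- Master step lemma: moving the second coordinate within a biclique preserves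
the component of the edge to a third vertex `z`. -/
lemma MSL {c d : Fin m} {x y y' z : Fin n}
    (h1 : InB P c d (x, y)) (h2 : InB P c d (x, y'))
    (hyz : Linked P (y, z))
    (n1 : ¬ SameComp P (x, y) (z, y))
    (n2 : ¬ SameComp P (x, y) (x, z)) :
    SameComp P (y, z) (y', z) := by
  obtain ⟨⟨hcx, hdx⟩, hdy, hcy⟩ := h1
  obtain ⟨⟨_, _⟩, hdy', hcy'⟩ := h2
  obtain ⟨g, h, ⟨hgy, hhy⟩, hhz, hgz⟩ := hyz
  cases hcz : P c z with
  | true =>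
    cases hdz : P d z with
    | false =>
      -- (z,y) ∈ B(c,d) together with (x,y):  contradiction with n1
      exact absurd (sameComp_of_inB (u := (x,y)) (v := (z,y))
        ⟨⟨hcx, hdx⟩, hdy, hcy⟩ ⟨⟨hcz, hdz⟩, hdy, hcy⟩) n1
    | true =>
      -- z has both c and d
      by_cases hg0 : ∃ g0, P g0 y = true ∧ P g0 y' = true ∧ P g0 z = false
      · obtain ⟨g0, k1, k2, k3⟩ := hg0
        exact sameComp_of_inB (u := (y,z)) (v := (y',z))
          ⟨⟨k1, hcy⟩, hcz, k3⟩ ⟨⟨k2, hcy'⟩, hcz, k3⟩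
      · push_neg at hg0
        have hgy' : P g y' = false := by
          cases hq : P g y' with
          | false => rfl
          | true => exact absurd hgz (hg0 g hgy hq)
        cases hgx : P g x with
        | false =>
          -- (x,y),(z,y) ∈ B(c,g): contradiction with n1
          exact absurd (sameComp_of_inB (u := (x,y)) (v := (z,y))
            ⟨⟨hcx, hgx⟩, hgy, hcy⟩ ⟨⟨hcz, hgz⟩, hgy, hcy⟩) n1
        | true =>
          -- (x,y'),(x,z) ∈ B(g,d): contradiction with n2
          have s1 : SameComp P (x, y') (x, z) := sameComp_of_inB
            ⟨⟨hgx, hdx⟩, hdy', hgy'⟩ ⟨⟨hgx, hdx⟩, hdz, hgz⟩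
          have s0 : SameComp P (x, y) (x, y') := sameComp_of_inB
            ⟨⟨hcx, hdx⟩, hdy, hcy⟩ ⟨⟨hcx, hdx⟩, hdy', hcy'⟩
          exact absurd (SC_trans s0 s1) n2
  | false =>
    cases hdz : P d z with
    | true =>
      -- (x,z) ∈ B(c,d):  contradiction with n2
      exact absurd (sameComp_of_inB (u := (x,y)) (v := (x,z))
        ⟨⟨hcx, hdx⟩, hdy, hcy⟩ ⟨⟨hcx, hdx⟩, hdz, hcz⟩) n2
    | false =>
      -- z has neither c nor d
      by_cases hf : ∃ f, P f z = true ∧ P f y = false ∧ P f y' = false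
      · obtain ⟨f, k1, k2, k3⟩ := hf
        exact sameComp_of_inB (u := (y,z)) (v := (y',z))
          ⟨⟨hdy, k2⟩, k1, hdz⟩ ⟨⟨hdy', k3⟩, k1, hdz⟩
      · push_neg at hf
        have hhy' : P h y' = true := by
          cases hq : P h y' with
          | true => rfl
          | false => exact absurd (hf h hhz hhy) (by simp [hq])
        cases hhx : P h x with
        | true =>
          -- (x,y),(z,y) ∈ B(h,d): contradiction with n1
          exact absurd (sameComp_of_inB (u := (x,y)) (v := (z,y))
            ⟨⟨hhx, hdx⟩, hdy, hhy⟩ ⟨⟨hhz, hdz⟩, hdy, hhy⟩) n1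
        | false =>
          -- (y',x),(z,x) ∈ B(h,c)
          have s1 : SameComp P (y', x) (z, x) := sameComp_of_inB
            ⟨⟨hhy', hcy'⟩, hcx, hhx⟩ ⟨⟨hhz, hcz⟩, hcx, hhx⟩
          have s2 : SameComp P (x, y') (x, z) := sameComp_swap s1
          have s0 : SameComp P (x, y) (x, y') := sameComp_of_inB
            ⟨⟨hcx, hdx⟩, hdy, hcy⟩ ⟨⟨hcx, hdx⟩, hdy', hcy'⟩
          exact absurd (SC_trans s0 s2) n2

/-- First-coordinate version, by symmetry. -/
lemma MSL_L {c d : Fin m} {x x' y z : Fin n}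
    (h1 : InB P c d (x, y)) (h2 : InB P c d (x', y))
    (hzx : Linked P (z, x))
    (n1 : ¬ SameComp P (x, y) (z, y))
    (n2 : ¬ SameComp P (x, y) (x, z)) :
    SameComp P (z, x) (z, x') := by
  have h1' : InB P d c (y, x) := inB_swap h1
  have h2' : InB P d c (y, x') := inB_swap h2
  have hxz : Linked P (x, z) := linked_swap hzx
  have n1' : ¬ SameComp P (y, x) (z, x) := fun hs => n2 (sameComp_swap hs)
  have n2' : ¬ SameComp P (y, x) (y, z) := fun hs => n1 (sameComp_swap hs)
  have := MSL h1' h2' hxz n1' n2'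
  exact sameComp_swap this

lemma fgadj_symm {u v : Fin n × Fin n} (h : FGAdj P u v) : FGAdj P v u := by
  obtain ⟨t, ⟨a, b, h1, h2, h3⟩, hcase⟩ := h
  rcases hcase with ⟨hu, hv⟩ | ⟨hu, hv⟩
  · exact ⟨(t.2.2, t.2.1, t.1), ⟨a, b, h3, h2, h1⟩, Or.inl ⟨hv, hu⟩⟩
  · exact ⟨(t.2.2, t.2.1, t.1), ⟨a, b, h3, h2, h1⟩, Or.inr ⟨hv, hu⟩⟩

/-- Rolling triangle lemma: a triangle `x → y → z → x` whose side colors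
resist the other two sides rolls along the whole component of `(x,y)`. -/
lemma roll {x y z : Fin n}
    (hyz : Linked P (y, z)) (hzx : Linked P (z, x))
    (G1 : ¬ SameComp P (x, y) (z, y))
    (G2 : ¬ SameComp P (x, y) (x, z)) :
    ∀ s t : Fin n, SameComp P (x, y) (s, t) →
      SameComp P (y, z) (t, z) ∧ SameComp P (z, x) (z, s) := by
  classical
  set Φ : Fin n × Fin n → Prop := fun w =>
    SameComp P (x, y) w ∧ SameComp P (y, z) (w.2, z) ∧ SameComp P (z, x) (z, w.1)
    with hΦ
  have step : ∀ u v : Fin n × Fin n, FGAdj P u v → Φ u → Φ v := by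
    rintro u v hadj ⟨m1, m2, m3⟩
    have hsc : SameComp P u v := Relation.EqvGen.rel _ _ hadj
    have hm1' : SameComp P (x, y) v := SC_trans m1 hsc
    obtain ⟨t, ⟨a, b, p1, p2, p3⟩, hcase⟩ := hadj
    rcases hcase with ⟨hu, hv⟩ | ⟨hu, hv⟩
    · -- u = (t.1, t.2.1), v = (t.2.2, t.2.1) : first coordinate moves
      subst hu; subst hv
      refine ⟨hm1', m2, ?_⟩
      -- need : SameComp (z,x) (z, t.2.2)
      have key : SameComp P (z, t.1) (z, t.2.2) := by
        apply MSL_L (c := a) (d := b) ⟨p1, p2⟩ ⟨p3, p2⟩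
        · exact linked_of_sameComp hzx m3
        · -- ¬ SameComp (t.1,t.2.1) (z,t.2.1)
          intro hs
          have h1 : SameComp P (x, y) (z, t.2.1) := SC_trans m1 hs
          have h2 : SameComp P (z, t.2.1) (z, y) :=
            SC_symm (sameComp_swap m2)
          exact G1 (SC_trans h1 h2)
        · -- ¬ SameComp (t.1,t.2.1) (t.1, z)
          intro hs
          have h1 : SameComp P (x, y) (t.1, z) := SC_trans m1 hs
          have h2 : SameComp P (t.1, z) (x, z) :=
            SC_symm (sameComp_swap m3)
          exact G2 (SC_trans h1 h2)
      exact SC_trans m3 key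
    · -- u = (t.2.1, t.1), v = (t.2.1, t.2.2) : second coordinate moves
      subst hu; subst hv
      refine ⟨hm1', ?_, m3⟩
      have key : SameComp P (t.1, z) (t.2.2, z) := by
        apply MSL (c := b) (d := a) (x := t.2.1) (y := t.1) (y' := t.2.2) (z := z)
          ⟨p2, p1⟩ ⟨p2, p3⟩
        · exact linked_of_sameComp hyz m2
        · -- ¬ SameComp (t.2.1, t.1) (z, t.1)
          intro hs
          have h1 : SameComp P (x, y) (z, t.1) := SC_trans m1 hs
          have h2 : SameComp P (z, t.1) (z, y) := SC_symm (sameComp_swap m2)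
          exact G1 (SC_trans h1 h2)
        · -- ¬ SameComp (t.2.1, t.1) (t.2.1, z)
          intro hs
          have h1 : SameComp P (x, y) (t.2.1, z) := SC_trans m1 hs
          have h2 : SameComp P (t.2.1, z) (x, z) := SC_symm (sameComp_swap m3)
          exact G2 (SC_trans h1 h2)
      exact SC_trans m2 key
  have main : ∀ u v : Fin n × Fin n, SameComp P u v → (Φ u ↔ Φ v) := by
    intro u v h
    induction h with
    | rel a' b' hab => exact ⟨step _ _ hab, step _ _ (fgadj_symm hab)⟩
    | refl a' => exact Iff.rfl
    | symm a' b' _ ih => exact ih.symm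
    | trans a' b' c' _ _ ih1 ih2 => exact ih1.trans ih2
  intro s t hst
  have hΦ0 : Φ (x, y) := ⟨SC_refl, SC_refl, SC_refl⟩
  have := (main _ _ hst).mp hΦ0
  exact ⟨this.2.1, this.2.2⟩

def Valid' (P : Fin m → Fin n → Bool) : Prop :=
  ∀ u : Fin n × Fin n, u.1 ≠ u.2 → ¬ SameComp P u (u.2, u.1)

def NoMono (P : Fin m → Fin n → Bool) : Prop :=
  ∀ (u : Fin n × Fin n) (a : Fin n),
    ¬ Relation.TransGen (fun x y => x ≠ y ∧ SameComp P (x, y) u) a a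

lemma lemX1 {a b c d : Fin m} {p q r : Fin n}
    (h1 : InB P a b (p, q)) (h2 : InB P c d (q, r))
    (hcmp : ∀ e, P e p = true → P e r = true) :
    SameComp P (p, q) (r, q) := by
  obtain ⟨⟨hap, hbp⟩, hbq, haq⟩ := h1
  obtain ⟨⟨hcq, hdq⟩, hdr, hcr⟩ := h2
  have har : P a r = true := hcmp a hap
  have hcp : P c p = false := by
    cases hq : P c p with
    | false => rfl
    | true => exact absurd (hcmp c hq) (by simp [hcr])
  exact sameComp_of_inB (u := (p,q)) (v := (r,q))
    ⟨⟨hap, hcp⟩, hcq, haq⟩ ⟨⟨har, hcr⟩, hcq, haq⟩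

lemma lemX2 {a b c d : Fin m} {p q r : Fin n}
    (h1 : InB P a b (p, q)) (h2 : InB P c d (q, r))
    (hcmp : ∀ f, P f r = true → P f p = true) :
    SameComp P (q, p) (q, r) := by
  obtain ⟨⟨hap, hbp⟩, hbq, haq⟩ := h1
  obtain ⟨⟨hcq, hdq⟩, hdr, hcr⟩ := h2
  have hdp : P d p = true := hcmp d hdr
  have hbr : P b r = false := by
    cases hq : P b r with
    | false => rfl
    | true => exact absurd (hcmp b hq) (by simp [hbp])
  exact sameComp_of_inB (u := (q,p)) (v := (q,r))
    ⟨⟨hbq, hdq⟩, hdp, hbp⟩ ⟨⟨hbq, hdq⟩, hdr, hbr⟩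

/-- Transitivity of components. -/
lemma TR (hV : Valid' P) (hM : NoMono P) {p q r : Fin n}
    (hpq : Linked P (p, q)) (hqr : Linked P (q, r))
    (hK : SameComp P (p, q) (q, r)) :
    SameComp P (p, q) (p, r) := by
  classical
  obtain ⟨a, b, hab⟩ := hpq
  obtain ⟨c, d, hcd⟩ := hqr
  have hpq_ne : p ≠ q := inB_ne hab
  have hqr_ne : q ≠ r := inB_ne hcd
  -- incomparability of the ballots of p and r
  have he : ∃ e, P e p = true ∧ P e r = false := by
    by_contra hcon
    push_neg at hcon
    have hcmp : ∀ e, P e p = true → P e r = true := by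
      intro e hep
      cases hq : P e r with
      | true => rfl
      | false => exact absurd hq (hcon e hep)
    have hs : SameComp P (p, q) (r, q) := lemX1 hab hcd hcmp
    exact hV (q, r) hqr_ne (SC_trans (SC_symm hK) hs)
  have hf : ∃ f, P f r = true ∧ P f p = false := by
    by_contra hcon
    push_neg at hcon
    have hcmp : ∀ f, P f r = true → P f p = true := by
      intro f hfr
      cases hq : P f p with
      | true => rfl
      | false => exact absurd hq (hcon f hfr)
    have hs : SameComp P (q, p) (q, r) := lemX2 hab hcd hcmp
    exact hV (p, q) hpq_ne (SC_trans hK (SC_symm hs))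
  obtain ⟨e, hep, her⟩ := he
  obtain ⟨f, hfr, hfp⟩ := hf
  have hpr : Linked P (p, r) := ⟨e, f, ⟨hep, hfp⟩, hfr, her⟩
  by_cases h1 : SameComp P (p, q) (p, r)
  · exact h1
  exfalso
  by_cases h2 : SameComp P (p, q) (r, p)
  · -- monochromatic directed 3-cycle p → q → r → p
    refine hM (p, q) p ?_
    have e1 : p ≠ q ∧ SameComp P (p, q) (p, q) := ⟨hpq_ne, SC_refl⟩
    have e2 : q ≠ r ∧ SameComp P (q, r) (p, q) := ⟨hqr_ne, SC_symm hK⟩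
    have e3 : r ≠ p ∧ SameComp P (r, p) (p, q) := ⟨fun hh => (linked_ne hpr) hh.symm,
      SC_symm h2⟩
    exact Relation.TransGen.head e1 (Relation.TransGen.head e2
      (Relation.TransGen.single e3))
  · -- roll (p,q) along its component to (q,r): contradiction at the diagonal
    have G1 : ¬ SameComp P (p, q) (r, q) := by
      intro hs
      exact hV (q, r) hqr_ne (SC_trans (SC_symm hK) hs)
    have hroll := roll (x := p) (y := q) (z := r) ⟨c, d, hcd⟩ (linked_swap hpr) G1 h1 q r hK
    have hdiag : SameComp P (r, r) (q, r) := SC_symm hroll.1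
    have := sameComp_diag hdiag rfl
    exact hqr_ne (congrArg Prod.fst this).symm

/-! ### The orientation rule -/

def cset (P : Fin m → Fin n → Bool) (u : Fin n × Fin n) : Set (Fin n × Fin n) :=
  {w | SameComp P u w}

def Afst (P : Fin m → Fin n → Bool) (u : Fin n × Fin n) : Set (Fin n) :=
  Prod.fst '' cset P u

def Bsnd (P : Fin m → Fin n → Bool) (u : Fin n × Fin n) : Set (Fin n) :=
  Prod.snd '' cset P u

def IsProdC (P : Fin m → Fin n → Bool) (u : Fin n × Fin n) : Prop :=
  cset P u = (Afst P u) ×ˢ (Bsnd P u)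

noncomputable def mA (P : Fin m → Fin n → Bool) (u : Fin n × Fin n) : ℕ :=
  sInf (Fin.val '' Afst P u)

noncomputable def mB (P : Fin m → Fin n → Bool) (u : Fin n × Fin n) : ℕ :=
  sInf (Fin.val '' Bsnd P u)

def enc (w : Fin n × Fin n) : ℕ := w.1.val * n + w.2.val

def cpick (P : Fin m → Fin n → Bool) (u : Fin n × Fin n) : Prop :=
  ∃ w ∈ cset P u, enc w = sInf (enc '' (cset P u ∪ cset P (u.2, u.1)))

def rho (P : Fin m → Fin n → Bool) (u : Fin n × Fin n) : Prop :=
  (IsProdC P u ∧ mA P u < mB P u) ∨ (¬ IsProdC P u ∧ cpick P u)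

lemma mem_cset {u w : Fin n × Fin n} : w ∈ cset P u ↔ SameComp P u w := Iff.rfl

lemma cset_eq {u v : Fin n × Fin n} (h : SameComp P u v) : cset P u = cset P v := by
  ext w
  exact ⟨fun hw => SC_trans (SC_symm h) hw, fun hw => SC_trans h hw⟩

lemma cset_swap (u : Fin n × Fin n) :
    cset P (u.2, u.1) = Prod.swap '' cset P u := by
  ext w
  constructor
  · intro hw
    refine ⟨(w.2, w.1), ?_, rfl⟩
    exact sameComp_swap hw
  · rintro ⟨v, hv, rfl⟩
    exact sameComp_swap hv

lemma Afst_swap (u : Fin n × Fin n) : Afst P (u.2, u.1) = Bsnd P u := by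
  unfold Afst Bsnd
  rw [cset_swap, Set.image_image]
  rfl

lemma Bsnd_swap (u : Fin n × Fin n) : Bsnd P (u.2, u.1) = Afst P u := by
  unfold Afst Bsnd
  rw [cset_swap, Set.image_image]
  rfl

lemma isProdC_swap {u : Fin n × Fin n} (h : IsProdC P u) : IsProdC P (u.2, u.1) := by
  unfold IsProdC at *
  rw [cset_swap, h, Set.image_swap_prod, Afst_swap, Bsnd_swap]

lemma isProdC_swap_iff {a b : Fin n} : IsProdC P (b, a) ↔ IsProdC P (a, b) :=
  ⟨fun h => isProdC_swap (u := (b, a)) h, fun h => isProdC_swap (u := (a, b)) h⟩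

lemma rho_congr {u v : Fin n × Fin n} (h : SameComp P u v) : rho P u ↔ rho P v := by
  have h1 : cset P u = cset P v := cset_eq h
  have h2 : cset P (u.2, u.1) = cset P (v.2, v.1) := by
    rw [cset_swap, cset_swap, h1]
  unfold rho IsProdC mA mB Afst Bsnd cpick
  rw [h1, h2]

lemma enc_inj {w w' : Fin n × Fin n} (h : enc w = enc w') : w = w' := by
  unfold enc at h
  have h2 : w.2.val = w'.2.val := by
    have e1 : (w.1.val * n + w.2.val) % n = w.2.val := by
      rw [Nat.add_comm, Nat.add_mul_mod_self_right, Nat.mod_eq_of_lt w.2.isLt]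
    have e2 : (w'.1.val * n + w'.2.val) % n = w'.2.val := by
      rw [Nat.add_comm, Nat.add_mul_mod_self_right, Nat.mod_eq_of_lt w'.2.isLt]
    rw [← e1, ← e2, h]
  have h1 : w.1.val = w'.1.val := by
    have hn : 0 < n := w.2.pos
    have e1 : (w.1.val * n + w.2.val) / n = w.1.val := by
      rw [Nat.add_comm, Nat.add_mul_div_right _ _ hn, Nat.div_eq_of_lt w.2.isLt,
        Nat.zero_add]
    have e2 : (w'.1.val * n + w'.2.val) / n = w'.1.val := by
      rw [Nat.add_comm, Nat.add_mul_div_right _ _ hn, Nat.div_eq_of_lt w'.2.isLt,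
        Nat.zero_add]
    rw [← e1, ← e2, h]
  exact Prod.ext (Fin.ext h1) (Fin.ext h2)

lemma prod_disjoint {u : Fin n × Fin n} (hprod : IsProdC P u) (hne : u.1 ≠ u.2) :
    ∀ α, α ∈ Afst P u → α ∈ Bsnd P u → False := by
  intro α hA hB
  have : (α, α) ∈ cset P u := by rw [hprod]; exact ⟨hA, hB⟩
  have hd := sameComp_diag (SC_symm this) rfl
  exact hne (by rw [← hd])

lemma cset_self (u : Fin n × Fin n) : u ∈ cset P u := SC_refl

lemma Afst_nonempty (u : Fin n × Fin n) : (Afst P u).Nonempty :=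
  ⟨u.1, u, cset_self u, rfl⟩

lemma Bsnd_nonempty (u : Fin n × Fin n) : (Bsnd P u).Nonempty :=
  ⟨u.2, u, cset_self u, rfl⟩

lemma mins_ne {u : Fin n × Fin n} (hprod : IsProdC P u) (hne : u.1 ≠ u.2) :
    mA P u ≠ mB P u := by
  intro heq
  have hA : mA P u ∈ Fin.val '' Afst P u :=
    Nat.sInf_mem ((Afst_nonempty u).image _)
  have hB : mB P u ∈ Fin.val '' Bsnd P u :=
    Nat.sInf_mem ((Bsnd_nonempty u).image _)
  obtain ⟨α, hαA, hα⟩ := hA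
  obtain ⟨β, hβB, hβ⟩ := hB
  have : α = β := Fin.ext (by rw [hα, hβ, heq])
  exact prod_disjoint hprod hne α hαA (this ▸ hβB)

lemma mA_swap (a b : Fin n) : mA P (b, a) = mB P (a, b) := by
  unfold mA mB
  rw [show ((b, a) : Fin n × Fin n) = (((a, b) : Fin n × Fin n).2,
    ((a, b) : Fin n × Fin n).1) from rfl, Afst_swap]

lemma mB_swap (a b : Fin n) : mB P (b, a) = mA P (a, b) := by
  unfold mA mB
  rw [show ((b, a) : Fin n × Fin n) = (((a, b) : Fin n × Fin n).2,
    ((a, b) : Fin n × Fin n).1) from rfl, Bsnd_swap]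

lemma rho_asymm (hV : Valid' P) {a b : Fin n} (hne : a ≠ b) :
    ¬ (rho P (a, b) ∧ rho P (b, a)) := by
  rintro ⟨h1, h2⟩
  rcases h1 with ⟨hp1, hm1⟩ | ⟨hp1, hc1⟩
  · rcases h2 with ⟨hp2, hm2⟩ | ⟨hp2, _⟩
    · have e1 : mA P (b, a) = mB P (a, b) := by
        unfold mA mB
        rw [show ((b, a) : Fin n × Fin n) = (((a, b) : Fin n × Fin n).2,
          ((a, b) : Fin n × Fin n).1) from rfl, Afst_swap]
      have e2 : mB P (b, a) = mA P (a, b) := by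
        unfold mA mB
        rw [show ((b, a) : Fin n × Fin n) = (((a, b) : Fin n × Fin n).2,
          ((a, b) : Fin n × Fin n).1) from rfl, Bsnd_swap]
      rw [e1, e2] at hm2
      exact absurd (hm1.trans hm2) (lt_irrefl _)
    · exact hp2 (isProdC_swap_iff.mpr hp1)
  · rcases h2 with ⟨hp2, _⟩ | ⟨hp2, hc2⟩
    · exact hp1 (isProdC_swap_iff.mp hp2)
    · obtain ⟨w, hw, hwe⟩ := hc1
      obtain ⟨w', hw', hwe'⟩ := hc2
      have hSeq : enc '' (cset P (a, b) ∪ cset P (b, a)) =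
          enc '' (cset P (b, a) ∪ cset P (a, b)) := by rw [Set.union_comm]
      have : w = w' := enc_inj (by rw [hwe, hwe', hSeq])
      subst this
      have hsw : SameComp P (a, b) (w.2, w.1) := sameComp_swap hw'
      have hww : SameComp P w (w.2, w.1) := SC_trans (SC_symm hw) hsw
      have hwne : w.1 ≠ w.2 := by
        intro hd
        have hwab := sameComp_diag (SC_symm hw) hd
        apply hne
        rw [hwab] at hd
        exact hd
      exact hV w hwne hww

lemma rho_total {a b : Fin n} (hne : a ≠ b) : rho P (a, b) ∨ rho P (b, a) := by
  classical
  by_cases hp : IsProdC P (a, b)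
  · have hp' : IsProdC P (b, a) := isProdC_swap_iff.mpr hp
    rcases lt_or_gt_of_ne (mins_ne hp hne) with h | h
    · exact Or.inl (Or.inl ⟨hp, h⟩)
    · refine Or.inr (Or.inl ⟨hp', ?_⟩)
      rw [mB_swap]
      rw [mA_swap]
      exact h
  · have hp' : ¬ IsProdC P (b, a) := fun h => hp (isProdC_swap_iff.mp h)
    have hS : (enc '' (cset P (a, b) ∪ cset P (b, a))).Nonempty :=
      ⟨enc (a, b), Set.mem_image_of_mem _ (Or.inl (cset_self _))⟩
    obtain ⟨w, hw, hwe⟩ := Nat.sInf_mem hS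
    rcases hw with hw | hw
    · exact Or.inl (Or.inr ⟨hp, w, hw, hwe⟩)
    · refine Or.inr (Or.inr ⟨hp', w, hw, ?_⟩)
      show enc w = sInf (enc '' (cset P (b, a) ∪ cset P (a, b)))
      rw [Set.union_comm]
      exact hwe

/-! ### Three-colored triangles: structural theorem -/

section Triangle

variable {p q r : Fin n}
variable (L1 : Linked P (p, q)) (L2 : Linked P (q, r)) (L3 : Linked P (r, p))
variable (nAB : ¬ SameComp P (p, q) (r, q))
variable (nAC : ¬ SameComp P (p, q) (p, r))
variable (nBC : ¬ SameComp P (q, r) (p, r))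

include L1 L2 L3 nAB nAC nBC

lemma tri_prod :
    ∀ s t s' t', SameComp P (p, q) (s, t) → SameComp P (p, q) (s', t') →
      SameComp P (p, q) (s, t') := by
  intro s t s' t' hst hst'
  have R1 := roll (x := p) (y := q) (z := r) L2 L3 nAB nAC
  obtain ⟨m2, m3⟩ := R1 s t hst
  obtain ⟨m2', _⟩ := R1 s' t' hst'
  have hyz' : Linked P (r, s) := linked_of_sameComp L3 m3
  have hzx' : Linked P (s, t) := linked_of_sameComp L1 hst
  have G1' : ¬ SameComp P (t, r) (s, r) := by
    intro hs
    have k1 : SameComp P (q, r) (s, r) := SC_trans m2 hs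
    have k2 : SameComp P (p, r) (s, r) := sameComp_swap m3
    exact nBC (SC_trans k1 (SC_symm k2))
  have G2' : ¬ SameComp P (t, r) (t, s) := by
    intro hs
    have k1 : SameComp P (q, r) (t, s) := SC_trans m2 hs
    have k2 : SameComp P (q, p) (t, s) := sameComp_swap hst
    have k3 : SameComp P (q, r) (q, p) := SC_trans k1 (SC_symm k2)
    exact nAB (SC_symm (sameComp_swap k3))
  have Rn := roll (x := t) (y := r) (z := s) hyz' hzx' G1' G2'
  have hmem : SameComp P (t, r) (t', r) := SC_trans (SC_symm m2) m2'
  exact SC_trans hst (Rn t' r hmem).2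

lemma tri_isProd : IsProdC P (p, q) := by
  apply Set.Subset.antisymm
  · intro w hw
    exact ⟨⟨w, hw, rfl⟩, ⟨w, hw, rfl⟩⟩
  · rintro ⟨α, β⟩ ⟨⟨w1, hw1, e1⟩, ⟨w2, hw2, e2⟩⟩
    have := tri_prod L1 L2 L3 nAB nAC nBC w1.1 w1.2 w2.1 w2.2 hw1 hw2
    rw [e1, e2] at this
    exact this

lemma tri_BA : Bsnd P (p, q) = Afst P (q, r) := by
  have R1 := roll (x := p) (y := q) (z := r) L2 L3 nAB nAC
  have G2'' : ¬ SameComp P (q, r) (q, p) := fun hs =>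
    nAB (SC_symm (sameComp_swap hs))
  have R2 := roll (x := q) (y := r) (z := p) L3 L1 nBC G2''
  ext t
  constructor
  · rintro ⟨w, hw, rfl⟩
    exact ⟨(w.2, r), (R1 w.1 w.2 hw).1, rfl⟩
  · rintro ⟨w, hw, rfl⟩
    exact ⟨(p, w.1), (R2 w.1 w.2 hw).2, rfl⟩

end Triangle

/-- Rotated distinctness hypotheses. -/
lemma rot_nAC {p q r : Fin n} (nAB : ¬ SameComp P (p, q) (r, q)) :
    ¬ SameComp P (q, r) (q, p) := fun hs => nAB (SC_symm (sameComp_swap hs))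

lemma rot_nBC {p q r : Fin n} (nAC : ¬ SameComp P (p, q) (p, r)) :
    ¬ SameComp P (r, p) (q, p) := fun hs => nAC (SC_symm (sameComp_swap hs))

/-! ### Acyclicity of the chosen orientation -/

def Ohat (P : Fin m → Fin n → Bool) : Set (Fin n × Fin n) :=
  {u | Linked P u ∧ rho P u}

def PathN (P : Fin m → Fin n → Bool) : ℕ → Fin n → Fin n → Prop
  | 0, a, b => a = b
  | (k+1), a, b => ∃ c, (a, c) ∈ Ohat P ∧ PathN P k c b

lemma transGen_pathN {a b : Fin n}
    (h : Relation.TransGen (fun x y => (x, y) ∈ Ohat P) a b) :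
    ∃ k, PathN P (k + 1) a b := by
  induction h with
  | single h => exact ⟨0, _, h, rfl⟩
  | tail _ h ih =>
      obtain ⟨k, hp⟩ := ih
      refine ⟨k + 1, ?_⟩
      clear * - hp h
      induction k generalizing a with
      | zero => obtain ⟨c, hc, rfl⟩ := hp; exact ⟨c, hc, _, h, rfl⟩
      | succ k ih =>
          obtain ⟨c, hc, hp'⟩ := hp
          exact ⟨c, hc, ih hp'⟩

lemma no_cycle (hV : Valid' P) (hM : NoMono P) :
    ∀ k, ∀ a : Fin n, ¬ PathN P (k + 1) a a := by
  classical
  intro k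
  induction k using Nat.strong_induction_on with
  | _ k IH =>
  intro a hpath
  obtain ⟨q, e1, h1⟩ := hpath
  cases k with
  | zero =>
    have : q = a := h1
    subst this
    exact linked_ne e1.1 rfl
  | succ k' =>
    obtain ⟨r, e2, h2⟩ := h1
    have hq_ne : a ≠ q := linked_ne e1.1
    have hqr_ne : q ≠ r := linked_ne e2.1
    have short : (a, r) ∈ Ohat P → False := fun har =>
      IH k' (Nat.lt_succ_self k') a ⟨r, har, h2⟩
    by_cases hra : r = a
    · subst hra
      cases k' with
      | zero => exact rho_asymm hV hq_ne ⟨e1.2, e2.2⟩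
      | succ k'' => exact IH k'' (by omega) r h2
    · have hL1 : Linked P (a, q) := e1.1
      have hL2 : Linked P (q, r) := e2.1
      obtain ⟨a0, b0, hab0⟩ := hL1
      obtain ⟨c0, d0, hcd0⟩ := hL2
      have hL1 : Linked P (a, q) := e1.1
      have hL2 : Linked P (q, r) := e2.1
      by_cases h12 : SameComp P (a, q) (q, r)
      · have htr := TR hV hM hL1 hL2 h12
        have hlink : Linked P (a, r) := linked_of_sameComp hL1 htr
        exact short ⟨hlink, (rho_congr htr).mp e1.2⟩
      by_cases h12' : SameComp P (a, q) (r, q)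
      · exact rho_asymm hV hqr_ne ⟨e2.2, (rho_congr h12').mp e1.2⟩
      -- distinct colors; first: ballots of a and r are incomparable
      have he : ∃ e, P e a = true ∧ P e r = false := by
        by_contra hcon
        push_neg at hcon
        have hcmp : ∀ e, P e a = true → P e r = true := by
          intro e hep
          cases hq : P e r with
          | true => rfl
          | false => exact absurd hq (hcon e hep)
        exact h12' (lemX1 hab0 hcd0 hcmp)
      have hf : ∃ f, P f r = true ∧ P f a = false := by
        by_contra hcon
        push_neg at hcon
        have hcmp : ∀ f, P f r = true → P f a = true := by
          intro f hfr
          cases hq : P f a with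
          | true => rfl
          | false => exact absurd hq (hcon f hfr)
        exact h12' (sameComp_swap (lemX2 hab0 hcd0 hcmp))
      obtain ⟨e0, hea, her⟩ := he
      obtain ⟨f0, hfr, hfa⟩ := hf
      have hLar : Linked P (a, r) := ⟨e0, f0, ⟨hea, hfa⟩, hfr, her⟩
      have har_ne : a ≠ r := fun h => hra h.symm
      rcases rho_total (P := P) har_ne with hr1 | hr2
      · exact short ⟨hLar, hr1⟩
      · -- triangle (a,q), (q,r), (r,a), all oriented by rho, pairwise distinct colors
        have hnar : ¬ rho P (a, r) := fun h => rho_asymm hV har_ne ⟨h, hr2⟩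
        have D4 : ¬ SameComp P (a, q) (a, r) := fun hs =>
          hnar ((rho_congr hs).mp e1.2)
        have D6 : ¬ SameComp P (q, r) (a, r) := fun hs =>
          hnar ((rho_congr hs).mp e2.2)
        have hL3 : Linked P (r, a) := linked_swap hLar
        have hP1 : IsProdC P (a, q) := tri_isProd hL1 hL2 hL3 h12' D4 D6
        have hBA1 : Bsnd P (a, q) = Afst P (q, r) := tri_BA hL1 hL2 hL3 h12' D4 D6
        have nAC2 := rot_nAC (p := a) (q := q) (r := r) h12'
        have nBC2 := rot_nBC (p := a) (q := q) (r := r) D4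
        have hP2 : IsProdC P (q, r) := tri_isProd hL2 hL3 hL1 D6 nAC2 nBC2
        have hBA2 : Bsnd P (q, r) = Afst P (r, a) := tri_BA hL2 hL3 hL1 D6 nAC2 nBC2
        have nAC3 := rot_nAC (p := q) (q := r) (r := a) D6
        have hP3 : IsProdC P (r, a) := tri_isProd hL3 hL1 hL2 nBC2 nAC3 h12'
        have hBA3 : Bsnd P (r, a) = Afst P (a, q) := tri_BA hL3 hL1 hL2 nBC2 nAC3 h12'
        have q1 : mA P (a, q) < mB P (a, q) := by
          rcases e1.2 with ⟨_, h⟩ | ⟨hnp, _⟩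
          · exact h
          · exact absurd hP1 hnp
        have q2 : mA P (q, r) < mB P (q, r) := by
          rcases e2.2 with ⟨_, h⟩ | ⟨hnp, _⟩
          · exact h
          · exact absurd hP2 hnp
        have q3 : mA P (r, a) < mB P (r, a) := by
          rcases hr2 with ⟨_, h⟩ | ⟨hnp, _⟩
          · exact h
          · exact absurd hP3 hnp
        have c1 : mB P (a, q) = mA P (q, r) := by unfold mA mB; rw [hBA1]
        have c2 : mB P (q, r) = mA P (r, a) := by unfold mA mB; rw [hBA2]
        have c3 : mB P (r, a) = mA P (a, q) := by unfold mA mB; rw [hBA3]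
        omega

lemma ohat_acyclic (hV : Valid' P) (hM : NoMono P) :
    ∀ a : Fin n, ¬ Relation.TransGen (fun x y => (x, y) ∈ Ohat P) a a := by
  intro a h
  obtain ⟨k, hp⟩ := transGen_pathN h
  exact no_cycle hV hM k a hp

/-! ### The final orientation -/

def Od (P : Fin m → Fin n → Bool) : Set (Fin n × Fin n) :=
  {u | (ColoredPair P u ∨ ColoredPair P (u.2, u.1)) ∧ rho P u}

lemma cp_diag {a : Fin n} : ¬ ColoredPair P (a, a) := by
  rintro ⟨w, hne, hsc⟩
  exact hne (sameComp_diag hsc rfl).symm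

lemma cp_congr {u v : Fin n × Fin n} (h : SameComp P u v) :
    ColoredPair P u → ColoredPair P v := by
  rintro ⟨w, hne, hsc⟩
  by_cases hvw : w = v
  · subst hvw
    exact ⟨u, Ne.symm hne, SC_symm h⟩
  · exact ⟨w, hvw, SC_trans (SC_symm h) hsc⟩

lemma cp_swap {a b : Fin n} (h : ColoredPair P (a, b)) : ColoredPair P (b, a) := by
  obtain ⟨w, hne, hsc⟩ := h
  refine ⟨(w.2, w.1), ?_, sameComp_swap hsc⟩
  intro hh
  apply hne
  have h1 := congrArg Prod.fst hh
  have h2 := congrArg Prod.snd hh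
  exact Prod.ext h2 h1

lemma cp_linked {u : Fin n × Fin n} (h : ColoredPair P u) : Linked P u := by
  obtain ⟨w, hne, hsc⟩ := h
  rcases sameComp_linked hsc with h' | ⟨h1, _⟩
  · exact absurd h'.symm hne
  · exact h1

lemma od_isOrient (hV : Valid' P) : IsOrient P (Od P) := by
  refine ⟨?_, ?_, ?_, ?_⟩
  · intro u hu; exact hu.1
  · intro u v h
    have hc : ColoredPair P u ↔ ColoredPair P v :=
      ⟨cp_congr h, cp_congr (SC_symm h)⟩
    have hc' : ColoredPair P (u.2, u.1) ↔ ColoredPair P (v.2, v.1) :=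
      ⟨cp_congr (sameComp_swap h), cp_congr (SC_symm (sameComp_swap h))⟩
    show ((ColoredPair P u ∨ ColoredPair P (u.2, u.1)) ∧ rho P u) ↔ _
    rw [hc, hc', rho_congr h]
    exact Iff.rfl
  · rintro a b ⟨⟨hcol1, hr1⟩, ⟨hcol2, hr2⟩⟩
    by_cases hab : a = b
    · subst hab
      rcases hcol1 with h | h <;> exact cp_diag h
    · exact rho_asymm hV hab ⟨hr1, hr2⟩
  · intro a b hcp
    have hne : a ≠ b := fun h => cp_diag (h ▸ hcp)
    rcases rho_total (P := P) hne with h | h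
    · exact Or.inl ⟨Or.inl hcp, h⟩
    · exact Or.inr ⟨Or.inr hcp, h⟩

lemma od_subset : Od P ⊆ Ohat P := by
  rintro u ⟨hcol, hr⟩
  refine ⟨?_, hr⟩
  rcases hcol with h | h
  · exact cp_linked h
  · exact linked_swap (cp_linked h)

lemma od_minrule (hV : Valid' P) (u : Fin n × Fin n) (A B : Set (Fin n))
    (hITT : InThreeColoredTriangle P u)
    (hcomp : {w | SameComp P u w} = A ×ˢ B) :
    (u ∈ Od P ↔ sInf (Fin.val '' A) < sInf (Fin.val '' B)) := by
  obtain ⟨x, y, z, hxy, _, _, _, _, _, hsc⟩ := hITT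
  have hcpu : ColoredPair P u := by
    rcases hsc with h | h
    · exact cp_congr (SC_symm h) hxy
    · exact cp_congr (SC_symm h) (cp_swap hxy)
  have hcset : cset P u = A ×ˢ B := hcomp
  have hu : u ∈ A ×ˢ B := hcset ▸ cset_self u
  have hA : Afst P u = A := by
    unfold Afst
    rw [hcset]
    exact Set.fst_image_prod A ⟨u.2, hu.2⟩
  have hB : Bsnd P u = B := by
    unfold Bsnd
    rw [hcset]
    exact Set.snd_image_prod ⟨u.1, hu.1⟩ B
  have hprod : IsProdC P u := by
    unfold IsProdC
    rw [hcset, hA, hB]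
  have hmA : mA P u = sInf (Fin.val '' A) := by unfold mA; rw [hA]
  have hmB : mB P u = sInf (Fin.val '' B) := by unfold mB; rw [hB]
  constructor
  · rintro ⟨_, hr⟩
    rcases hr with ⟨_, hlt⟩ | ⟨hnp, _⟩
    · rw [← hmA, ← hmB]; exact hlt
    · exact absurd hprod hnp
  · intro hlt
    exact ⟨Or.inl hcpu, Or.inl ⟨hprod, by rw [hmA, hmB]; exact hlt⟩⟩

lemma part1 (hV : Valid P) (hM : NoMono P) :
    ∃ O : Set (Fin n × Fin n), IsOrient P O ∧
      (∀ a : Fin n, ¬ Relation.TransGen (fun x y => (x, y) ∈ O) a a) ∧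
      (∀ (u : Fin n × Fin n) (A B : Set (Fin n)),
        InThreeColoredTriangle P u → {w | SameComp P u w} = A ×ˢ B →
        (u ∈ O ↔ sInf (Fin.val '' A) < sInf (Fin.val '' B))) := by
  have hV' : Valid' P := hV
  refine ⟨Od P, od_isOrient hV', ?_, fun u A B h1 h2 => od_minrule hV' u A B h1 h2⟩
  intro a h
  exact ohat_acyclic hV' hM a (Relation.TransGen.mono (fun x y hxy => od_subset hxy) _ _ h)

/-! ### Part 2: from an acyclic orientation to a single-crossing order -/

lemma part2_exists (hV : Valid P) (hM : NoMono P) :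
    ∃ r : Fin n → Fin n → Prop, IsStrictTotalOrder (Fin n) r ∧
      ∀ c ∈ CP P, nbSat r c := by
  classical
  have hV' : Valid' P := hV
  have hOr := od_isOrient (P := P) hV'
  have hAc : ∀ a : Fin n, ¬ Relation.TransGen (fun x y => (x, y) ∈ Od P) a a :=
    fun a h => ohat_acyclic hV' hM a
      (Relation.TransGen.mono (fun x y hxy => od_subset hxy) _ _ h)
  set T := Relation.TransGen (fun x y : Fin n => (x, y) ∈ Od P) with hT
  let pre : Fin n → Fin n → Prop := fun a b => T a b ∨ a = b
  haveI hpo : IsPartialOrder (Fin n) pre :=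
    { refl := fun a => Or.inr rfl
      trans := by
        rintro a b c (hab | rfl) (hbc | rfl)
        · exact Or.inl (hab.trans hbc)
        · exact Or.inl hab
        · exact Or.inl hbc
        · exact Or.inr rfl
      antisymm := by
        rintro a b (hab | rfl) (hba | hba)
        · exact absurd (hab.trans hba) (hAc a)
        · exact hba.symm
        · rfl
        · rfl }
  obtain ⟨s, hlin, hext⟩ := extend_partialOrder pre
  haveI := hlin
  let rr : Fin n → Fin n → Prop := fun a b => s a b ∧ a ≠ b
  have hSTO : IsStrictTotalOrder (Fin n) rr :=
    { trichotomous := fun a b => by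
        by_cases hab : a = b
        · exact fun _ _ => hab
        · rcases total_of s a b with h | h
          · exact fun h1 _ => absurd (⟨h, hab⟩ : rr a b) h1
          · exact fun _ h2 => absurd (⟨h, Ne.symm hab⟩ : rr b a) h2
      irrefl := fun a h => h.2 rfl
      trans := by
        rintro a b c ⟨h1, ne1⟩ ⟨h2, ne2⟩
        refine ⟨trans_of s h1 h2, fun he => ne1 ?_⟩
        subst he
        exact antisymm_of s h1 h2 }
  have hedge : ∀ {a b : Fin n}, (a, b) ∈ Od P → rr a b := by
    intro a b h
    refine ⟨hext a b (Or.inl (Relation.TransGen.single h)), fun he => ?_⟩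
    subst he
    exact hAc a (Relation.TransGen.single h)
  refine ⟨rr, hSTO, ?_⟩
  rintro ⟨i, j, k⟩ ⟨a, b, h1, h2, h3⟩
  have hib : InB P a b (i, j) := ⟨h1, h2⟩
  have hkb : InB P a b (k, j) := ⟨h3, h2⟩
  have hij : i ≠ j := inB_ne hib
  have hkj : k ≠ j := inB_ne hkb
  by_cases hik : i = k
  · subst hik
    constructor
    · rintro ⟨x1, x2⟩
      exact hij (antisymm_of s x1.1 x2.1)
    · rintro ⟨x1, x2⟩
      exact hij (antisymm_of s x1.1 x2.1)
  · have hcp : ColoredPair P (i, j) :=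
      ⟨(k, j), fun hh => hik (congrArg Prod.fst hh).symm, sameComp_of_inB hib hkb⟩
    rcases hOr.2.2.2 i j hcp with hijO | hjiO
    · have hkjO : (k, j) ∈ Od P :=
        (hOr.2.1 _ _ (sameComp_of_inB hib hkb)).mp hijO
      have r1 := hedge hijO
      have r2 := hedge hkjO
      constructor
      · rintro ⟨_, hjk⟩
        exact hkj (antisymm_of s r2.1 hjk.1)
      · rintro ⟨_, hji⟩
        exact hij (antisymm_of s r1.1 hji.1)
    · have hswap : SameComp P (j, i) (j, k) :=
        sameComp_swap (sameComp_of_inB hib hkb)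
      have hjkO : (j, k) ∈ Od P := (hOr.2.1 _ _ hswap).mp hjiO
      have r1 := hedge hjiO
      have r2 := hedge hjkO
      constructor
      · rintro ⟨hij', _⟩
        exact hij (antisymm_of s hij'.1 r1.1)
      · rintro ⟨hkj', _⟩
        exact hkj (antisymm_of s hkj'.1 r2.1)

lemma part2_rev {r : Fin n → Fin n → Prop} (hSTO : IsStrictTotalOrder (Fin n) r)
    (hsat : ∀ c ∈ CP P, nbSat r c) : Valid P ∧ NoMono P := by
  classical
  haveI := hSTO
  have htri : ∀ a b : Fin n, a ≠ b → r a b ∨ r b a := by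
    intro a b hab
    rcases trichotomous_of r a b with h | h | h
    · exact Or.inl h
    · exact absurd h hab
    · exact Or.inr h
  have Inv : ∀ u v : Fin n × Fin n, SameComp P u v → (r u.1 u.2 ↔ r v.1 v.2) := by
    intro u v h
    induction h with
    | rel u' v' hadj =>
        obtain ⟨t, htCP, hcase⟩ := hadj
        have nb := hsat t htCP
        obtain ⟨a, b, p1, p2, p3⟩ := htCP
        have hij : t.1 ≠ t.2.1 := inB_ne (⟨p1, p2⟩ : InB P a b (t.1, t.2.1))
        have hkj : t.2.2 ≠ t.2.1 := inB_ne (⟨p3, p2⟩ : InB P a b (t.2.2, t.2.1))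
        rcases hcase with ⟨hu, hv⟩ | ⟨hu, hv⟩ <;> subst hu <;> subst hv
        · constructor
          · intro h1
            rcases htri t.2.2 t.2.1 hkj with h | h
            · exact h
            · exact absurd ⟨h1, h⟩ nb.1
          · intro h2
            rcases htri t.1 t.2.1 hij with h | h
            · exact h
            · exact absurd ⟨h2, h⟩ nb.2
        · constructor
          · intro h1
            rcases htri t.2.1 t.2.2 (Ne.symm hkj) with h | h
            · exact h
            · exact absurd ⟨h, h1⟩ nb.2
          · intro h2
            rcases htri t.2.1 t.1 (Ne.symm hij) with h | h
            · exact h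
            · exact absurd ⟨h, h2⟩ nb.1
    | refl u' => exact Iff.rfl
    | symm u' v' _ ih => exact ih.symm
    | trans u' v' w' _ _ ih1 ih2 => exact ih1.trans ih2
  constructor
  · intro u hne hsc
    have hiff := Inv u (u.2, u.1) hsc
    rcases htri u.1 u.2 hne with h | h
    · exact irrefl_of r u.1 (trans_of r h (hiff.mp h))
    · exact irrefl_of r u.2 (trans_of r h (hiff.mpr h))
  · intro u a hTG
    by_cases hu : r u.1 u.2
    · have h2 : Relation.TransGen r a a :=
        Relation.TransGen.mono (fun x y hxy => (Inv (x, y) u hxy.2).mpr hu) _ _ hTG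
      have htr : Transitive r := fun _ _ _ h1 h2 => trans_of r h1 h2
      haveI : IsTrans (Fin n) r := ⟨htr⟩
      rw [Relation.transGen_eq_self (r := r)] at h2
      exact irrefl_of r a h2
    · have h2 : Relation.TransGen (fun x y => r y x) a a := by
        refine Relation.TransGen.mono (fun x y hxy => ?_) _ _ hTG
        rcases htri x y hxy.1 with h | h
        · exact absurd ((Inv (x, y) u hxy.2).mp h) hu
        · exact h
      have htr : Transitive (fun x y => r y x) := fun _ _ _ h1 h2 => trans_of r h2 h1
      haveI : IsTrans (Fin n) (fun x y => r y x) := ⟨htr⟩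
      rw [Relation.transGen_eq_self (r := fun x y => r y x)] at h2
      exact irrefl_of r a h2
end S15

/-- if the formula graph of an approval profile admits a complementary pairs
partition and the colorful graph has no monochromatic directed cycle, then an acyclic
orientation of its colors exists, and it can be chosen so that every color involved in a
three-colored triangle, being a biclique `A × B`, is oriented from `A` to `B` iff
`min A < min B`.  In particular, the profile is possibly single-crossing iff no component
of the formula graph contains complementary vertices and the colorful graph has no
monochromatic cycle. -/
theorem stmt15 {m n : ℕ} (P : Fin m → Fin n → Bool) :
    ((Valid P ∧
      (∀ (u : Fin n × Fin n) (a : Fin n),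
        ¬ Relation.TransGen (fun x y => x ≠ y ∧ SameComp P (x, y) u) a a)) →
      ∃ O : Set (Fin n × Fin n), IsOrient P O ∧
        (∀ a : Fin n, ¬ Relation.TransGen (fun x y => (x, y) ∈ O) a a) ∧
        (∀ (u : Fin n × Fin n) (A B : Set (Fin n)),
          InThreeColoredTriangle P u →
          {w | SameComp P u w} = A ×ˢ B →
          (u ∈ O ↔ sInf (Fin.val '' A) < sInf (Fin.val '' B)))) ∧
    ((∃ r : Fin n → Fin n → Prop, IsStrictTotalOrder (Fin n) r ∧
        ∀ c ∈ CP P, nbSat r c) ↔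
      (Valid P ∧
       ∀ (u : Fin n × Fin n) (a : Fin n),
         ¬ Relation.TransGen (fun x y => x ≠ y ∧ SameComp P (x, y) u) a a)) := by
  constructor
  · rintro ⟨hV, hM⟩
    exact S15.part1 hV hM
  · constructor
    · rintro ⟨r, hSTO, hsat⟩
      exact S15.part2_rev hSTO hsat
    · rintro ⟨hV, hM⟩
      exact S15.part2_exists hV hM
end
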